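/- arXiv:2103.05474 — 2 statements merged into one kernel-verified Lean document; each statement's English description precedes it below -/
import Mathlib

section
/- Let Z be a hidden Markov model whose transition matrix ℙ = (p_{ij}) is irreducible and has at least one row consisting entirely of strictly positive entries. Then assumptions A1 and A2 hold. -/
open MeasureTheory ProbabilityTheory ENNReal

namespace PMMPaper

/-! ### General Markov chain notions (general state space) -/

section Kernels

variable {S : Type*} [MeasurableSpace S]

open Classical in
/-- `kpow κ k` is the `k`-step transition kernel of a Markov chain with one-step kernel `κ`. -/
noncomputable def kpow (κ : Kernel S S) : ℕ → Kernel S S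
  | 0 => Kernel.id
  | n + 1 => kpow κ n ∘ₖ κ

/-- `φ` is an irreducibility measure for the chain with kernel `κ`:
`φ(A) > 0` implies that from every point `z` some `k`-step transition reaches `A`
with positive probability. -/
def IsIrreducibilityMeasure (κ : Kernel S S) (φ : Measure S) : Prop :=
  ∀ A : Set S, MeasurableSet A → 0 < φ A → ∀ z : S, ∃ k : ℕ, 1 ≤ k ∧ 0 < kpow κ k z A

/-- `ψ` is a maximal irreducibility measure: a σ-finite irreducibility measure dominating
every other σ-finite irreducibility measure. -/
def IsMaxIrreducibilityMeasure (κ : Kernel S S) (ψ : Measure S) : Prop :=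
  SigmaFinite ψ ∧ IsIrreducibilityMeasure κ ψ ∧
    ∀ φ : Measure S, SigmaFinite φ → IsIrreducibilityMeasure κ φ → φ ≪ ψ

/-- `Pz` is the family of laws (on the path space `ℕ → S`) of the Markov chain with
transition kernel `κ` started at the point `z`:  `Pz z` is a probability measure under which
the coordinate process starts at `z` and is Markov with kernel `κ`. -/
def IsMarkovFamily (κ : Kernel S S) (Pz : S → Measure (ℕ → S)) : Prop :=
  (∀ z : S, IsProbabilityMeasure (Pz z)) ∧
  (∀ z : S, Pz z {ω | ω 0 = z} = 1) ∧
  ∀ (z : S) (n : ℕ) (g : S → ℝ≥0∞), Measurable g → ∀ C : Set (ℕ → S),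
    MeasurableSet[⨆ i ∈ Set.Iic n, MeasurableSpace.comap (fun ω : ℕ → S => ω i) inferInstance] C →
    ∫⁻ ω in C, g (ω (n + 1)) ∂(Pz z) = ∫⁻ ω in C, ∫⁻ z', g z' ∂(κ (ω n)) ∂(Pz z)

/-- Harris recurrence property (relative to the measure `ψ`): every set charged by `ψ` is
visited infinitely often, almost surely, from every starting point. -/
def HarrisProp (κ : Kernel S S) (Pz : S → Measure (ℕ → S)) (ψ : Measure S) : Prop :=
  ∀ A : Set S, MeasurableSet A → 0 < ψ A → ∀ z : S,
    Pz z {ω | ∀ N : ℕ, ∃ k : ℕ, N ≤ k ∧ ω k ∈ A} = 1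

/-- `π` is an invariant measure for the kernel `κ`. -/
def IsInvariantMeasure (κ : Kernel S S) (π : Measure S) : Prop :=
  π.bind (fun z => κ z) = π

/-- The chain is positive: its transition kernel admits an invariant probability measure. -/
def IsPositive (κ : Kernel S S) : Prop :=
  ∃ π : Measure S, IsProbabilityMeasure π ∧ IsInvariantMeasure κ π

/-- The process `Z` on `(Ω, P)` is a homogeneous Markov chain with transition kernel `κ`. -/
def IsMarkovChain {Ω : Type*} [MeasurableSpace Ω] (P : Measure Ω) (Z : ℕ → Ω → S)
    (κ : Kernel S S) : Prop :=
  (∀ k : ℕ, Measurable (Z k)) ∧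
  ∀ (n : ℕ) (g : S → ℝ≥0∞), Measurable g → ∀ C : Set Ω,
    MeasurableSet[⨆ i ∈ Set.Iic n, MeasurableSpace.comap (Z i) inferInstance] C →
    ∫⁻ ω in C, g (Z (n + 1) ω) ∂P = ∫⁻ ω in C, ∫⁻ z', g z' ∂(κ (Z n ω)) ∂P

/-- The process `Z : ℤ → Ω → S` on `(Ω, P)` is a (two-sided) homogeneous Markov chain
with transition kernel `κ`. -/
def IsMarkovChainZ {Ω : Type*} [MeasurableSpace Ω] (P : Measure Ω) (Z : ℤ → Ω → S)
    (κ : Kernel S S) : Prop :=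
  (∀ k : ℤ, Measurable (Z k)) ∧
  ∀ (n : ℤ) (g : S → ℝ≥0∞), Measurable g → ∀ C : Set Ω,
    MeasurableSet[⨆ i ∈ Set.Iic n, MeasurableSpace.comap (Z i) inferInstance] C →
    ∫⁻ ω in C, g (Z (n + 1) ω) ∂P = ∫⁻ ω in C, ∫⁻ z', g z' ∂(κ (Z n ω)) ∂P

/-- The reversed-time process of the two-sided chain `Z` is a Markov chain with kernel `κ'`. -/
def IsRevMarkovChainZ {Ω : Type*} [MeasurableSpace Ω] (P : Measure Ω) (Z : ℤ → Ω → S)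
    (κ' : Kernel S S) : Prop :=
  ∀ (n : ℤ) (g : S → ℝ≥0∞), Measurable g → ∀ C : Set Ω,
    MeasurableSet[⨆ i ∈ Set.Ici n, MeasurableSpace.comap (Z i) inferInstance] C →
    ∫⁻ ω in C, g (Z (n - 1) ω) ∂P = ∫⁻ ω in C, ∫⁻ z', g z' ∂(κ' (Z n ω)) ∂P

/-- The two-sided process `Z` is stationary: all finite-dimensional distributions are
invariant under time shifts. -/
def IsStationaryZ {Ω : Type*} [MeasurableSpace Ω] (P : Measure Ω) (Z : ℤ → Ω → S) : Prop :=
  ∀ (k : ℤ) (n : ℕ),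
    P.map (fun ω => fun i : Fin n => Z (k + (i : ℕ)) ω) =
      P.map (fun ω => fun i : Fin n => Z ((i : ℕ) : ℤ) ω)

/-- First-coordinate projection `A_(1)` of a set of finite strings. -/
def proj1 {α : Type*} {R : ℕ} (A : Set (Fin (R + 1) → α)) : Set α :=
  (fun x => x 0) '' A

/-- The section `A(a) = {x_{2:r} : (a, x_{2:r}) ∈ A}`. -/
def secSet {α : Type*} {R : ℕ} (A : Set (Fin (R + 1) → α)) (a : α) : Set (Fin R → α) :=
  {xr | Fin.cons a xr ∈ A}

end Kernels

/-! ### Pairwise Markov models -/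

variable {𝓧 : Type*} [MeasurableSpace 𝓧] {𝓨 : Type*} [Fintype 𝓨] [DecidableEq 𝓨]
  [MeasurableSpace 𝓨] [MeasurableSingletonClass 𝓨] [Nonempty 𝓨]
  {Ω : Type*} [MeasurableSpace Ω]

/-- `Z` is a pairwise Markov model on `(Ω, P)`: a homogeneous Markov chain on `𝓧 × 𝓨`
whose transition kernel `κ` has density `q(z'|z)` with respect to `μ × count`, and whose
initial distribution has density `p0` with respect to `μ × count`. -/
def IsPMM (P : Measure Ω) (Z : ℕ → Ω → 𝓧 × 𝓨) (κ : Kernel (𝓧 × 𝓨) (𝓧 × 𝓨))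
    (μ : Measure 𝓧) (q : 𝓧 × 𝓨 → 𝓧 × 𝓨 → ℝ≥0∞) (p0 : 𝓧 × 𝓨 → ℝ≥0∞) : Prop :=
  IsProbabilityMeasure P ∧ IsMarkovChain P Z κ ∧ SigmaFinite μ ∧
  Measurable (Function.uncurry q) ∧ Measurable p0 ∧
  (∀ z : 𝓧 × 𝓨, (κ z : Measure (𝓧 × 𝓨)) =
      (μ.prod Measure.count).withDensity (fun z' => q z' z)) ∧
  P.map (Z 0) = (μ.prod Measure.count).withDensity p0

/-- Two-sided version of `IsPMM`. -/
def IsPMMZ (P : Measure Ω) (Z : ℤ → Ω → 𝓧 × 𝓨) (κ : Kernel (𝓧 × 𝓨) (𝓧 × 𝓨))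
    (μ : Measure 𝓧) (q : 𝓧 × 𝓨 → 𝓧 × 𝓨 → ℝ≥0∞) (p0 : 𝓧 × 𝓨 → ℝ≥0∞) : Prop :=
  IsProbabilityMeasure P ∧ IsMarkovChainZ P Z κ ∧ SigmaFinite μ ∧
  Measurable (Function.uncurry q) ∧ Measurable p0 ∧
  (∀ z : 𝓧 × 𝓨, (κ z : Measure (𝓧 × 𝓨)) =
      (μ.prod Measure.count).withDensity (fun z' => q z' z)) ∧
  P.map (Z 0) = (μ.prod Measure.count).withDensity p0

/-- `pijD q x i j` is the conditional density
`p_{ij}(x_{1:r}) = p(x_{2:r}, y_r = j | x_1, y_1 = i)` (a string `x` of length `R+1`). -/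
noncomputable def pijD (q : 𝓧 × 𝓨 → 𝓧 × 𝓨 → ℝ≥0∞) {R : ℕ} (x : Fin (R + 1) → 𝓧)
    (i j : 𝓨) : ℝ≥0∞ :=
  ∑ y : Fin (R + 1) → 𝓨,
    (if y 0 = i ∧ y (Fin.last R) = j then
      ∏ k : Fin R, q (x k.succ, y k.succ) (x k.castSucc, y k.castSucc) else 0)

/-- `pmidD q x i t j` is the density `p(y_{t+1} = j, x_{2:r} | x_1, y_1 = i)`. -/
noncomputable def pmidD (q : 𝓧 × 𝓨 → 𝓧 × 𝓨 → ℝ≥0∞) {R : ℕ} (x : Fin (R + 1) → 𝓧)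
    (i : 𝓨) (t : Fin (R + 1)) (j : 𝓨) : ℝ≥0∞ :=
  ∑ y : Fin (R + 1) → 𝓨,
    (if y 0 = i ∧ y t = j then
      ∏ k : Fin R, q (x k.succ, y k.succ) (x k.castSucc, y k.castSucc) else 0)

/-- `pxD q x i = p(x_{2:r} | x_1, y_1 = i)`. -/
noncomputable def pxD (q : 𝓧 × 𝓨 → 𝓧 × 𝓨 → ℝ≥0∞) {R : ℕ} (x : Fin (R + 1) → 𝓧)
    (i : 𝓨) : ℝ≥0∞ :=
  ∑ j : 𝓨, pijD q x i j

/-- The set `Y⁺(x_{1:r}) = {(i,j) : p_{ij}(x_{1:r}) > 0}`. -/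
def Yplus (q : 𝓧 × 𝓨 → 𝓧 × 𝓨 → ℝ≥0∞) {R : ℕ} (x : Fin (R + 1) → 𝓧) : Set (𝓨 × 𝓨) :=
  {p : 𝓨 × 𝓨 | 0 < pijD q x p.1 p.2}

/-- Joint density `p(x_{1:r}, y_{1:r})` of `Z_{1:r}`, built from the initial density `p0`
and the transition density `q`. -/
noncomputable def jointD (p0 : 𝓧 × 𝓨 → ℝ≥0∞) (q : 𝓧 × 𝓨 → 𝓧 × 𝓨 → ℝ≥0∞) {R : ℕ}
    (x : Fin (R + 1) → 𝓧) (y : Fin (R + 1) → 𝓨) : ℝ≥0∞ :=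
  p0 (x 0, y 0) * ∏ k : Fin R, q (x k.succ, y k.succ) (x k.castSucc, y k.castSucc)

/-- Density `p(x_{1:r})` of the observations `X_{1:r}`. -/
noncomputable def pXD (p0 : 𝓧 × 𝓨 → ℝ≥0∞) (q : 𝓧 × 𝓨 → 𝓧 × 𝓨 → ℝ≥0∞) {R : ℕ}
    (x : Fin (R + 1) → 𝓧) : ℝ≥0∞ :=
  ∑ y : Fin (R + 1) → 𝓨, jointD p0 q x y

/-- The set `Y*(x_{1:r}) = {(y_1, y_r) : ∃ y_{2:r-1}, p(x_{1:r}, y_{1:r}) > 0}`. -/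
def Ystar (p0 : 𝓧 × 𝓨 → ℝ≥0∞) (q : 𝓧 × 𝓨 → 𝓧 × 𝓨 → ℝ≥0∞) {R : ℕ}
    (x : Fin (R + 1) → 𝓧) : Set (𝓨 × 𝓨) :=
  {p : 𝓨 × 𝓨 | ∃ y : Fin (R + 1) → 𝓨,
    y 0 = p.1 ∧ y (Fin.last R) = p.2 ∧ 0 < jointD p0 q x y}

/-- Assumption **A1**: there is `r = R + 1 > 1` and a set `E ⊆ 𝓧^r` on which
`Y⁺(x_{1:r}) = Y⁺` is constant, nonempty, and a product set. -/
def Assumption1 (q : 𝓧 × 𝓨 → 𝓧 × 𝓨 → ℝ≥0∞) {R : ℕ} (E : Set (Fin (R + 1) → 𝓧))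
    (Yp : Set (𝓨 × 𝓨)) : Prop :=
  1 ≤ R ∧ Yp.Nonempty ∧ (∀ x ∈ E, Yplus q x = Yp) ∧
    Yp = (Prod.fst '' Yp) ×ˢ (Prod.snd '' Yp)

/-- Assumption **A2**: `ψ` is a maximal irreducibility measure for the chain,
`ψ(E_(1) × Y⁺_(1)) > 0` and `μ^{r-1}(E(x₁)) > 0` for all `x₁ ∈ E_(1)`. -/
def Assumption2 (κ : Kernel (𝓧 × 𝓨) (𝓧 × 𝓨)) (ψ : Measure (𝓧 × 𝓨)) (μ : Measure 𝓧)
    {R : ℕ} (E : Set (Fin (R + 1) → 𝓧)) (Yp : Set (𝓨 × 𝓨)) : Prop :=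
  IsMaxIrreducibilityMeasure κ ψ ∧
  0 < ψ (proj1 E ×ˢ (Prod.fst '' Yp)) ∧
  ∀ x₁ ∈ proj1 E, 0 < (Measure.pi fun _ : Fin R => μ) (secSet E x₁)

/-- Assumption **A1'** (stationary case): `Y*(x_{1:r}) = Y*` is constant on `E`,
nonempty and a product set. -/
def Assumption1' (p0 : 𝓧 × 𝓨 → ℝ≥0∞) (q : 𝓧 × 𝓨 → 𝓧 × 𝓨 → ℝ≥0∞) {R : ℕ}
    (E : Set (Fin (R + 1) → 𝓧)) (Ys : Set (𝓨 × 𝓨)) : Prop :=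
  1 ≤ R ∧ Ys.Nonempty ∧ (∀ x ∈ E, Ystar p0 q x = Ys) ∧
    Ys = (Prod.fst '' Ys) ×ˢ (Prod.snd '' Ys)

/-- Assumption **A2'**: `μ^r(E) > 0`. -/
def Assumption2' (μ : Measure 𝓧) {R : ℕ} (E : Set (Fin (R + 1) → 𝓧)) : Prop :=
  0 < (Measure.pi fun _ : Fin (R + 1) => μ) E

/-! ### Smoothing distributions -/

/-- The σ-algebra `σ(X_{l:n})` generated by the observations with indices in `[l, n]`. -/
noncomputable def obsSigma (Z : ℕ → Ω → 𝓧 × 𝓨) (l n : ℕ) : MeasurableSpace Ω :=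
  ⨆ i ∈ Set.Icc l n, MeasurableSpace.comap (fun ω => (Z i ω).1) inferInstance

/-- The σ-algebra `σ(X_{s:∞})` generated by the observations with indices `≥ s`. -/
noncomputable def obsSigmaFrom (Z : ℕ → Ω → 𝓧 × 𝓨) (s : ℕ) : MeasurableSpace Ω :=
  ⨆ i ∈ Set.Ici s, MeasurableSpace.comap (fun ω => (Z i ω).1) inferInstance

/-- The smoothing probability `ν^t_{l:n;m}(v) = P(Y_{t:t+m-1} = v | X_{l:n})`,
realized as a conditional expectation of an indicator. -/
noncomputable def smooth (P : Measure Ω) (Z : ℕ → Ω → 𝓧 × 𝓨) (t l n : ℕ) {m : ℕ}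
    (v : Fin m → 𝓨) : Ω → ℝ :=
  P[Set.indicator {ω | ∀ i : Fin m, (Z (t + (i : ℕ)) ω).2 = v i} (fun _ => (1 : ℝ)) |
    obsSigma Z l n]

/-- Total variation distance `‖ν^t_{l:n;m} − ν^t_{s:n;m}‖_TV`. -/
noncomputable def tvBlock (P : Measure Ω) (Z : ℕ → Ω → 𝓧 × 𝓨) (t l s n m : ℕ) (ω : Ω) : ℝ :=
  ∑ v : Fin m → 𝓨, |smooth P Z t l n v ω - smooth P Z t s n v ω|

/-- Two-sided version: the σ-algebra `σ(X_i ; i ∈ I)` for `I ⊆ ℤ`. -/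
noncomputable def obsSigmaZ (Z : ℤ → Ω → 𝓧 × 𝓨) (I : Set ℤ) : MeasurableSpace Ω :=
  ⨆ i ∈ I, MeasurableSpace.comap (fun ω => (Z i ω).1) inferInstance

/-- Two-sided smoothing probability `P(Y_{t:t+m-1} = v | X_i ; i ∈ I)`. -/
noncomputable def smoothZ (P : Measure Ω) (Z : ℤ → Ω → 𝓧 × 𝓨) (t : ℤ) (I : Set ℤ) {m : ℕ}
    (v : Fin m → 𝓨) : Ω → ℝ :=
  P[Set.indicator {ω | ∀ i : Fin m, (Z (t + (i : ℕ)) ω).2 = v i} (fun _ => (1 : ℝ)) |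
    obsSigmaZ Z I]

/-- Two-sided total variation distance between smoothing distributions with observation
index sets `I` and `J`. -/
noncomputable def tvBlockZ (P : Measure Ω) (Z : ℤ → Ω → 𝓧 × 𝓨) (t : ℤ) (I J : Set ℤ)
    (m : ℕ) (ω : Ω) : ℝ :=
  ∑ v : Fin m → 𝓨, |smoothZ P Z t I v ω - smoothZ P Z t J v ω|

/-! ### Counters, Doeblin matrices -/

/-- `κ_k(X_{s:t})`: the number of (almost non-overlapping) `E`-blocks of length `R+1`
in the observed string, counting from position `s + k` (paper's `κ_k`, `r' = R`). -/
noncomputable def kapCount (Z : ℕ → Ω → 𝓧 × 𝓨) {R : ℕ} (E : Set (Fin (R + 1) → 𝓧))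
    (s t kk : ℕ) (ω : Ω) : ℕ :=
  ∑ u ∈ Finset.range ((t - kk - s) / R),
    Set.indicator E (fun _ => 1) (fun i : Fin (R + 1) => (Z (u * R + s + kk + (i : ℕ)) ω).1)

/-- `κ̄(X_{s:t})`: the backward counter, counting `E`-blocks from position `t` backwards. -/
noncomputable def kapBar (Z : ℕ → Ω → 𝓧 × 𝓨) {R : ℕ} (E : Set (Fin (R + 1) → 𝓧))
    (s t : ℕ) (ω : Ω) : ℕ :=
  ∑ u ∈ Finset.range ((t - s) / R),
    Set.indicator E (fun _ => 1) (fun i : Fin (R + 1) => (Z (t - (u + 1) * R + (i : ℕ)) ω).1)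

open Classical in
/-- The segment `x_{a+1:b+1}` (0-based indices `a..b`) of a string of length `L+1`. -/
def segv {L : ℕ} (x : Fin (L + 1) → 𝓧) (a b : ℕ) (hab : a ≤ b) (hb : b ≤ L) :
    Fin (b - a + 1) → 𝓧 :=
  fun i => x ⟨a + (i : ℕ), by omega⟩

/-- Normalizing constant `c(x_{r:n}) = ∑_{j ∈ Y₂} p(x_{r+1:n} | x_r, y_r = j)`. -/
noncomputable def normC (q : 𝓧 × 𝓨 → 𝓧 × 𝓨 → ℝ≥0∞) (Y2 : Set 𝓨) {M : ℕ}
    (w : Fin (M + 1) → 𝓧) : ℝ≥0∞ :=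
  ∑ j : 𝓨, Set.indicator Y2 (fun j' => pxD q w j') j

/-- The probability vector `λ[x_{r:n}](j)`. -/
noncomputable def lamD (q : 𝓧 × 𝓨 → 𝓧 × 𝓨 → ℝ≥0∞) (Y2 : Set 𝓨) {M : ℕ}
    (w : Fin (M + 1) → 𝓧) (j : 𝓨) : ℝ≥0∞ :=
  Set.indicator Y2 (fun j' => pxD q w j') j / normC q Y2 w

/-- The matrix `U[x_{1:n}](i,j)`; a version of `P(Y_r = j | X_{1:n} = x_{1:n}, Y_1 = i)`. -/
noncomputable def UMat (q : 𝓧 × 𝓨 → 𝓧 × 𝓨 → ℝ≥0∞) (Y2 : Set 𝓨) {L R : ℕ} (hR : R ≤ L)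
    (x : Fin (L + 1) → 𝓧) (i j : 𝓨) : ℝ≥0∞ :=
  if 0 < pxD q x i then pmidD q x i ⟨R, by omega⟩ j / pxD q x i
  else lamD q Y2 (segv x R L hR (le_refl L)) j

/-! ### Total variation of measures, conditional laws of `Y_{t:∞}` -/

open Classical in
/-- Total variation distance between two measures (normalized as in the paper:
`‖P − Q‖_TV = 2 sup_A |P(A) − Q(A)|`). -/
noncomputable def tvDistM {W : Type*} [MeasurableSpace W] (ρ₁ ρ₂ : Measure W) : ℝ≥0∞ :=
  2 * ⨆ (A : Set W) (_ : MeasurableSet A), ((ρ₁ A - ρ₂ A) ⊔ (ρ₂ A - ρ₁ A))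

/-- The observation vector `X_{l:n}`. -/
def obsVec (Z : ℕ → Ω → 𝓧 × 𝓨) (l n : ℕ) (ω : Ω) : Fin (n + 1 - l) → 𝓧 :=
  fun i => (Z (l + (i : ℕ)) ω).1

/-- The tail signal process `Y_{t:∞}`. -/
def tailY (Z : ℕ → Ω → 𝓧 × 𝓨) (t : ℕ) (ω : Ω) : ℕ → 𝓨 :=
  fun k => (Z (t + k) ω).2

/-- The observation tail `X_{l:∞}`. -/
def obsTail (Z : ℕ → Ω → 𝓧 × 𝓨) (l : ℕ) (ω : Ω) : ℕ → 𝓧 :=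
  fun k => (Z (l + k) ω).1

/-- A regular version of the conditional distribution `P(Y_{t:∞} ∈ · | X_{l:n})`,
evaluated at `ω`. -/
noncomputable def condLawTail (P : Measure Ω) [IsFiniteMeasure P] (Z : ℕ → Ω → 𝓧 × 𝓨)
    (t l n : ℕ) (ω : Ω) : Measure (ℕ → 𝓨) :=
  condDistrib (tailY Z t) (obsVec Z l n) P (obsVec Z l n ω)

/-- A regular version of the conditional distribution `P(Y_{t:∞} ∈ · | X_{l:∞})`,
evaluated at `ω`. -/
noncomputable def condLawTailInf (P : Measure Ω) [IsFiniteMeasure P] (Z : ℕ → Ω → 𝓧 × 𝓨)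
    (t l : ℕ) (ω : Ω) : Measure (ℕ → 𝓨) :=
  condDistrib (tailY Z t) (obsTail Z l) P (obsTail Z l ω)

/-! ### Hidden Markov models and matrices -/

/-- Powers of a nonnegative matrix on `𝓨`. -/
noncomputable def matpow (p : 𝓨 → 𝓨 → ℝ≥0∞) : ℕ → 𝓨 → 𝓨 → ℝ≥0∞
  | 0 => fun i j => if i = j then 1 else 0
  | n + 1 => fun i j => ∑ k : 𝓨, matpow p n i k * p k j

/-- The sub-matrix `ℙ_C` of `p` with rows and columns restricted to `C` (and `0` outside). -/
noncomputable def subMat (p : 𝓨 → 𝓨 → ℝ≥0∞) (C : Set 𝓨) : 𝓨 → 𝓨 → ℝ≥0∞ :=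
  fun i j => Set.indicator (C ×ˢ C) (fun ij : 𝓨 × 𝓨 => p ij.1 ij.2) (i, j)

/-- Support `G_i = {x : f_i(x) > 0}` of the emission density `f_i`. -/
def emisSupp (f : 𝓨 → 𝓧 → ℝ≥0∞) (i : 𝓨) : Set 𝓧 :=
  {x | 0 < f i x}

/-- `C` is a cluster: `μ[(∩_{i∈C} G_i) \ (∪_{i∉C} G_i)] > 0`. -/
def IsCluster (μ : Measure 𝓧) (f : 𝓨 → 𝓧 → ℝ≥0∞) (C : Set 𝓨) : Prop :=
  0 < μ ((⋂ i ∈ C, emisSupp f i) \ (⋃ i ∈ Cᶜ, emisSupp f i))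

/-! ### Auxiliary material for Statement 17 -/

set_option linter.unusedSectionVars false

section CombAux

/-- One step of the constrained reachability dynamics. -/
def stepS (r : 𝓨 → 𝓨 → Prop) (C S : Set 𝓨) : Set 𝓨 := {j | j ∈ C ∧ ∃ s ∈ S, r s j}

/-- Fold of `stepS` over a list of clusters (left to right). -/
def foldS (r : 𝓨 → 𝓨 → Prop) : List (Set 𝓨) → Set 𝓨 → Set 𝓨
  | [], S => S
  | C :: w, S => foldS r w (stepS r C S)

lemma foldS_cons (r : 𝓨 → 𝓨 → Prop) (C : Set 𝓨) (w : List (Set 𝓨)) (S : Set 𝓨) :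
    foldS r (C :: w) S = foldS r w (stepS r C S) := rfl

lemma foldS_append (r : 𝓨 → 𝓨 → Prop) (u v : List (Set 𝓨)) (S : Set 𝓨) :
    foldS r (u ++ v) S = foldS r v (foldS r u S) := by
  induction u generalizing S with
  | nil => rfl
  | cons C u ih => simp [foldS_cons, ih]

lemma stepS_mono (r : 𝓨 → 𝓨 → Prop) (C : Set 𝓨) {S T : Set 𝓨} (h : S ⊆ T) :
    stepS r C S ⊆ stepS r C T := by
  rintro j ⟨hjC, s, hs, hr⟩; exact ⟨hjC, s, h hs, hr⟩

lemma foldS_mono (r : 𝓨 → 𝓨 → Prop) (w : List (Set 𝓨)) {S T : Set 𝓨} (h : S ⊆ T) :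
    foldS r w S ⊆ foldS r w T := by
  induction w generalizing S T with
  | nil => exact h
  | cons C w ih => exact ih (stepS_mono r C h)

lemma stepS_empty (r : 𝓨 → 𝓨 → Prop) (C : Set 𝓨) : stepS r C ∅ = ∅ := by
  ext j; simp [stepS]

lemma foldS_empty (r : 𝓨 → 𝓨 → Prop) (w : List (Set 𝓨)) : foldS r w ∅ = ∅ := by
  induction w with
  | nil => rfl
  | cons C w ih => simp [foldS_cons, stepS_empty, ih]

lemma stepS_subset (r : 𝓨 → 𝓨 → Prop) (C S : Set 𝓨) : stepS r C S ⊆ C :=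
  fun _ h => h.1

lemma foldS_last_subset (r : 𝓨 → 𝓨 → Prop) (u : List (Set 𝓨)) (C : Set 𝓨) (S : Set 𝓨) :
    foldS r (u ++ [C]) S ⊆ C := by
  rw [foldS_append]; exact stepS_subset r C _

lemma stepS_full (r : 𝓨 → 𝓨 → Prop) {i₀ : 𝓨} (hrow : ∀ j, r i₀ j) (C : Set 𝓨)
    {S : Set 𝓨} (hS : i₀ ∈ S) : stepS r C S = C := by
  apply Set.Subset.antisymm (stepS_subset r C S)
  exact fun j hj => ⟨hj, i₀, hS, hrow j⟩

lemma journey (r : 𝓨 → 𝓨 → Prop) (𝒞 : Set (Set 𝓨)) (hcl : ∀ s : 𝓨, ∃ C ∈ 𝒞, s ∈ C) :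
    ∀ (n : ℕ) (y : ℕ → 𝓨), (∀ k < n, r (y k) (y (k + 1))) →
    ∀ S : Set 𝓨, y 0 ∈ S → ∃ w : List (Set 𝓨), w.length = n ∧ (∀ C ∈ w, C ∈ 𝒞) ∧
      y n ∈ foldS r w S := by
  intro n
  induction n with
  | zero => intro y _ S hS; exact ⟨[], rfl, by simp, hS⟩
  | succ n ih =>
    intro y hy S hS
    obtain ⟨w, hlen, hw, hmem⟩ := ih y (fun k hk => hy k (by omega)) S hS
    obtain ⟨C, hC, hyC⟩ := hcl (y (n + 1))
    refine ⟨w ++ [C], by simp [hlen], ?_, ?_⟩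
    · intro D hD
      rcases List.mem_append.1 hD with h | h
      · exact hw D h
      · simp at h; subst h; exact hC
    · rw [foldS_append]
      exact ⟨hyC, y n, hmem, hy n (by omega)⟩

lemma journeySet (r : 𝓨 → 𝓨 → Prop) (𝒞 : Set (Set 𝓨)) (i₀ : 𝓨)
    (hcl : ∀ s : 𝓨, ∃ C ∈ 𝒞, s ∈ C)
    (hpath : ∀ i j : 𝓨, ∃ (n : ℕ) (y : ℕ → 𝓨), y 0 = i ∧ y n = j ∧
      ∀ k < n, r (y k) (y (k + 1)))
    {S : Set 𝓨} (hS : S.Nonempty) :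
    ∃ w : List (Set 𝓨), (∀ C ∈ w, C ∈ 𝒞) ∧ i₀ ∈ foldS r w S := by
  obtain ⟨s, hs⟩ := hS
  obtain ⟨n, y, hy0, hyn, hstep⟩ := hpath s i₀
  obtain ⟨w, _, hw, hmem⟩ := journey r 𝒞 hcl n y hstep S (hy0 ▸ hs)
  exact ⟨w, hw, hyn ▸ hmem⟩

lemma mergeWord (r : 𝓨 → 𝓨 → Prop) (𝒞 : Set (Set 𝓨)) (i₀ : 𝓨) (Cst : Set 𝓨)
    (hcl : ∀ s : 𝓨, ∃ C ∈ 𝒞, s ∈ C) (hCst : Cst ∈ 𝒞) (hi₀ : i₀ ∈ Cst)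
    (hrow : ∀ j, r i₀ j)
    (hpath : ∀ i j : 𝓨, ∃ (n : ℕ) (y : ℕ → 𝓨), y 0 = i ∧ y n = j ∧
      ∀ k < n, r (y k) (y (k + 1)))
    (U V : Set 𝓨) (hU : U.Nonempty) :
    ∃ w : List (Set 𝓨), w ≠ [] ∧ (∀ C ∈ w, C ∈ 𝒞) ∧ foldS r w U = Cst ∧
      (foldS r w V = Cst ∨ foldS r w V = ∅) := by
  obtain ⟨w1, hw1, hU1⟩ := journeySet r 𝒞 i₀ hcl hpath hU
  set w2 := w1 ++ [Cst] with hw2def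
  have hw2 : ∀ C ∈ w2, C ∈ 𝒞 := by
    intro C hC
    rcases List.mem_append.1 hC with h | h
    · exact hw1 C h
    · simp at h; subst h; exact hCst
  have hU2 : foldS r w2 U = Cst := by
    rw [hw2def, foldS_append, foldS_cons]
    simp only [foldS]
    exact stepS_full r hrow Cst hU1
  by_cases hV2 : foldS r w2 V = ∅
  · exact ⟨w2, by simp [hw2def], hw2, hU2, Or.inr hV2⟩
  · have hV2ne : (foldS r w2 V).Nonempty := Set.nonempty_iff_ne_empty.2 hV2
    obtain ⟨w3, hw3, hV3⟩ := journeySet r 𝒞 i₀ hcl hpath hV2ne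
    have hVsub : foldS r w2 V ⊆ Cst := foldS_last_subset r w1 Cst V
    have hU3' : i₀ ∈ foldS r w3 Cst := foldS_mono r w3 hVsub hV3
    refine ⟨w2 ++ w3 ++ [Cst], by simp [hw2def], ?_, ?_, Or.inl ?_⟩
    · intro C hC
      rcases List.mem_append.1 hC with h | h
      · rcases List.mem_append.1 h with h' | h'
        · exact hw2 C h'
        · exact hw3 C h'
      · simp at h; subst h; exact hCst
    · rw [foldS_append, foldS_append, hU2, foldS_cons]
      simp only [foldS]
      exact stepS_full r hrow Cst hU3'
    · rw [foldS_append, foldS_append, foldS_cons]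
      simp only [foldS]
      exact stepS_full r hrow Cst hV3

open Classical in
/-- The set of distinct nonempty "alive" values of the profile after word `u`. -/
noncomputable def aliveVals (r : 𝓨 → 𝓨 → Prop) (u : List (Set 𝓨)) : Finset (Set 𝓨) :=
  (Finset.univ.image fun i : 𝓨 => foldS r u {i}).erase ∅

/-- Main combinatorial result: a good word of clusters exists. -/
theorem exists_good_word (r : 𝓨 → 𝓨 → Prop) (𝒞 : Set (Set 𝓨)) (i₀ : 𝓨) (Cst : Set 𝓨)
    (hcl : ∀ s : 𝓨, ∃ C ∈ 𝒞, s ∈ C) (hCst : Cst ∈ 𝒞) (hi₀ : i₀ ∈ Cst)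
    (hrow : ∀ j, r i₀ j)
    (hpath : ∀ i j : 𝓨, ∃ (n : ℕ) (y : ℕ → 𝓨), y 0 = i ∧ y n = j ∧
      ∀ k < n, r (y k) (y (k + 1))) :
    ∃ w : List (Set 𝓨), w ≠ [] ∧ (∀ C ∈ w, C ∈ 𝒞) ∧
      (∃ i : 𝓨, (foldS r w {i}).Nonempty) ∧
      ∀ i i' : 𝓨, (foldS r w {i}).Nonempty → (foldS r w {i'}).Nonempty →
        foldS r w {i} = foldS r w {i'} := by
  classical
  have hstart : ∃ u : List (Set 𝓨), u ≠ [] ∧ (∀ C ∈ u, C ∈ 𝒞) ∧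
      ∃ i : 𝓨, (foldS r u {i}).Nonempty := by
    refine ⟨[Cst], by simp, by simpa using hCst, i₀, ?_⟩
    have : foldS r ([Cst]) {i₀} = Cst := by
      show stepS r Cst {i₀} = Cst
      exact stepS_full r hrow Cst rfl
    rw [this]; exact ⟨i₀, hi₀⟩
  obtain ⟨u₀, hu₀ne, hu₀cl, halive₀⟩ := hstart
  suffices h : ∀ (d : ℕ) (u : List (Set 𝓨)), u ≠ [] → (∀ C ∈ u, C ∈ 𝒞) →
      (∃ i : 𝓨, (foldS r u {i}).Nonempty) → (aliveVals r u).card ≤ d →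
      ∃ w : List (Set 𝓨), w ≠ [] ∧ (∀ C ∈ w, C ∈ 𝒞) ∧
        (∃ i : 𝓨, (foldS r w {i}).Nonempty) ∧
        ∀ i i' : 𝓨, (foldS r w {i}).Nonempty → (foldS r w {i'}).Nonempty →
          foldS r w {i} = foldS r w {i'} by
    exact h (aliveVals r u₀).card u₀ hu₀ne hu₀cl halive₀ le_rfl
  intro d
  induction d with
  | zero =>
    intro u hne hcl' ⟨i, hi⟩ hcard
    exfalso
    have hmem : foldS r u {i} ∈ aliveVals r u := by
      refine Finset.mem_erase.2 ⟨Set.nonempty_iff_ne_empty.1 hi, ?_⟩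
      exact Finset.mem_image.2 ⟨i, Finset.mem_univ i, rfl⟩
    have := Finset.card_pos.2 ⟨_, hmem⟩
    omega
  | succ d ih =>
    intro u hne hucl halive hcard
    by_cases hgood : ∀ i i' : 𝓨, (foldS r u {i}).Nonempty → (foldS r u {i'}).Nonempty →
        foldS r u {i} = foldS r u {i'}
    · exact ⟨u, hne, hucl, halive, hgood⟩
    · push_neg at hgood
      obtain ⟨i, i', hi, hi', hne'⟩ := hgood
      obtain ⟨w, hwne, hwcl, hUw, hVw⟩ := mergeWord r 𝒞 i₀ Cst hcl hCst hi₀ hrow hpath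
        (foldS r u {i}) (foldS r u {i'}) hi
      set v := u ++ w with hvdef
      have hvfold : ∀ k : 𝓨, foldS r v {k} = foldS r w (foldS r u {k}) := by
        intro k; rw [hvdef, foldS_append]
      have hvalive : ∃ k : 𝓨, (foldS r v {k}).Nonempty := by
        refine ⟨i, ?_⟩
        rw [hvfold, hUw]; exact ⟨i₀, hi₀⟩
      have hvcl : ∀ C ∈ v, C ∈ 𝒞 := by
        intro C hC
        rcases List.mem_append.1 hC with h | h
        · exact hucl C h
        · exact hwcl C h
      have hsub : aliveVals r v ⊆
          Finset.image (foldS r w) ((aliveVals r u).erase (foldS r u {i'})) := by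
        intro X hX
        obtain ⟨hXne, hXim⟩ := Finset.mem_erase.1 hX
        obtain ⟨k, _, hk⟩ := Finset.mem_image.1 hXim
        rw [hvfold k] at hk
        have hkne : foldS r u {k} ≠ ∅ := by
          intro h0
          rw [h0, foldS_empty] at hk
          exact hXne hk.symm
        by_cases hkV : foldS r u {k} = foldS r u {i'}
        · rw [hkV] at hk
          rcases hVw with hV | hV
          · refine Finset.mem_image.2 ⟨foldS r u {i}, ?_, by rw [hUw, ← hV, hk]⟩
            refine Finset.mem_erase.2 ⟨hne', Finset.mem_erase.2 ⟨?_, ?_⟩⟩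
            · exact Set.nonempty_iff_ne_empty.1 hi
            · exact Finset.mem_image.2 ⟨i, Finset.mem_univ i, rfl⟩
          · exfalso; rw [hV] at hk; exact hXne hk.symm
        · refine Finset.mem_image.2 ⟨foldS r u {k}, ?_, hk⟩
          refine Finset.mem_erase.2 ⟨hkV, Finset.mem_erase.2 ⟨hkne, ?_⟩⟩
          exact Finset.mem_image.2 ⟨k, Finset.mem_univ k, rfl⟩
      have hVmem : foldS r u {i'} ∈ aliveVals r u := by
        refine Finset.mem_erase.2 ⟨Set.nonempty_iff_ne_empty.1 hi', ?_⟩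
        exact Finset.mem_image.2 ⟨i', Finset.mem_univ i', rfl⟩
      have hcard' : (aliveVals r v).card ≤ d := by
        calc (aliveVals r v).card
            ≤ (Finset.image (foldS r w) ((aliveVals r u).erase (foldS r u {i'}))).card :=
              Finset.card_le_card hsub
          _ ≤ ((aliveVals r u).erase (foldS r u {i'})).card := Finset.card_image_le
          _ = (aliveVals r u).card - 1 := Finset.card_erase_of_mem hVmem
          _ ≤ d := by omega
      exact ih v (by simp [hvdef, hne]) hvcl hvalive hcard'

/-- `foldN` version of `foldS` indexed by natural numbers. -/
def foldN (r : 𝓨 → 𝓨 → Prop) (c : ℕ → Set 𝓨) : ℕ → Set 𝓨 → Set 𝓨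
  | 0, S => S
  | n + 1, S => stepS r (c n) (foldN r c n S)

lemma foldN_congr (r : 𝓨 → 𝓨 → Prop) {c c' : ℕ → Set 𝓨} (n : ℕ)
    (h : ∀ k < n, c k = c' k) (S : Set 𝓨) : foldN r c n S = foldN r c' n S := by
  induction n with
  | zero => rfl
  | succ n ih =>
    show stepS r (c n) _ = stepS r (c' n) _
    rw [h n (by omega), ih (fun k hk => h k (by omega))]

lemma foldS_eq_foldN (r : 𝓨 → 𝓨 → Prop) (w : List (Set 𝓨)) (S : Set 𝓨) :
    foldS r w S = foldN r (fun k => w.getD k ∅) w.length S := by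
  induction w using List.reverseRecOn generalizing S with
  | nil => rfl
  | append_singleton u C ih =>
    have h1 : (u ++ [C]).getD u.length ∅ = C := by
      rw [List.getD_append_right u ([C]) ∅ u.length le_rfl]
      simp
    have h2 : foldN r (fun k => (u ++ [C]).getD k ∅) u.length S
        = foldN r (fun k => u.getD k ∅) u.length S :=
      foldN_congr r u.length (fun k hk => List.getD_append u ([C]) ∅ k hk) S
    have h3 : (u ++ [C]).length = u.length + 1 := by simp
    rw [foldS_append, h3]
    show stepS r C (foldS r u S) = stepS r ((u ++ [C]).getD u.length ∅)
      (foldN r (fun k => (u ++ [C]).getD k ∅) u.length S)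
    rw [h1, h2, ih]

lemma mem_foldN_iff_path (r : 𝓨 → 𝓨 → Prop) (c : ℕ → Set 𝓨) :
    ∀ (n : ℕ) (S : Set 𝓨) (j : 𝓨), j ∈ foldN r c n S ↔
      ∃ y : ℕ → 𝓨, y 0 ∈ S ∧ y n = j ∧ ∀ k < n, r (y k) (y (k + 1)) ∧ y (k + 1) ∈ c k := by
  intro n
  induction n with
  | zero =>
    intro S j
    constructor
    · intro h; exact ⟨fun _ => j, h, rfl, by omega⟩
    · rintro ⟨y, h0, hn, _⟩; rwa [hn] at h0
  | succ n ih =>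
    intro S j
    constructor
    · rintro ⟨hjc, s, hs, hr⟩
      obtain ⟨y, h0, hn, hcond⟩ := (ih S s).1 hs
      refine ⟨fun m => if m = n + 1 then j else y m, by simpa using h0, by simp, ?_⟩
      intro k hk
      by_cases hkn : k < n
      · have h1 : k ≠ n + 1 := by omega
        have h2 : k + 1 ≠ n + 1 := by omega
        simpa [h1, h2, show k ≠ n by omega] using hcond k hkn
      · have hkeq : k = n := by omega
        subst hkeq
        have h1 : k ≠ k + 1 := by omega
        simp only [if_neg h1, if_pos rfl]
        rw [hn]
        exact ⟨hr, hjc⟩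
    · rintro ⟨y, h0, hn, hcond⟩
      have hyn : y n ∈ foldN r c n S :=
        (ih S (y n)).2 ⟨y, h0, rfl, fun k hk => hcond k (by omega)⟩
      exact ⟨hn ▸ (hcond n (by omega)).2, y n, hyn, hn ▸ (hcond n (by omega)).1⟩

end CombAux

section MatpowAux

lemma matpow_one (pm : 𝓨 → 𝓨 → ℝ≥0∞) (i j : 𝓨) : matpow pm 1 i j = pm i j := by
  show ∑ k : 𝓨, matpow pm 0 i k * pm k j = pm i j
  have : ∀ k : 𝓨, matpow pm 0 i k * pm k j = if k = i then pm k j else 0 := by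
    intro k
    show (if i = k then (1:ℝ≥0∞) else 0) * pm k j = _
    by_cases h : i = k
    · simp [h]
    · simp [h, Ne.symm h]
  simp_rw [this]
  simp

lemma matpow_succ_left (pm : 𝓨 → 𝓨 → ℝ≥0∞) (n : ℕ) (i j : 𝓨) :
    matpow pm (n + 1) i j = ∑ k : 𝓨, pm i k * matpow pm n k j := by
  induction n generalizing j with
  | zero =>
    rw [matpow_one]
    have : ∀ k : 𝓨, pm i k * matpow pm 0 k j = if k = j then pm i k else 0 := by
      intro k
      show pm i k * (if k = j then (1:ℝ≥0∞) else 0) = _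
      by_cases h : k = j <;> simp [h]
    simp_rw [this]
    simp
  | succ n ih =>
    show ∑ k : 𝓨, matpow pm (n+1) i k * pm k j = ∑ k : 𝓨, pm i k * matpow pm (n+1) k j
    simp_rw [ih]
    calc ∑ x : 𝓨, (∑ k : 𝓨, pm i k * matpow pm n k x) * pm x j
        = ∑ x : 𝓨, ∑ k : 𝓨, pm i k * matpow pm n k x * pm x j := by
          simp_rw [Finset.sum_mul]
      _ = ∑ k : 𝓨, ∑ x : 𝓨, pm i k * matpow pm n k x * pm x j := Finset.sum_comm
      _ = ∑ k : 𝓨, pm i k * ∑ x : 𝓨, matpow pm n k x * pm x j := by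
          simp_rw [mul_assoc, ← Finset.mul_sum]
      _ = ∑ k : 𝓨, pm i k * matpow pm (n+1) k j := rfl

lemma matpow_pos_path (pm : 𝓨 → 𝓨 → ℝ≥0∞) :
    ∀ (n : ℕ) (i j : 𝓨), 0 < matpow pm n i j →
      ∃ y : ℕ → 𝓨, y 0 = i ∧ y n = j ∧ ∀ k < n, 0 < pm (y k) (y (k + 1)) := by
  intro n
  induction n with
  | zero =>
    intro i j h
    have hij : i = j := by
      by_contra hne
      have : matpow pm 0 i j = 0 := if_neg hne
      rw [this] at h; exact lt_irrefl 0 h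
    exact ⟨fun _ => i, rfl, hij ▸ rfl, by omega⟩
  | succ n ih =>
    intro i j h
    have : ∃ k : 𝓨, matpow pm n i k * pm k j ≠ 0 := by
      by_contra hall
      push_neg at hall
      have : matpow pm (n+1) i j = 0 := by
        show ∑ k : 𝓨, matpow pm n i k * pm k j = 0
        exact Finset.sum_eq_zero fun k _ => hall k
      rw [this] at h; exact lt_irrefl 0 h
    obtain ⟨k, hk⟩ := this
    rw [mul_ne_zero_iff] at hk
    obtain ⟨y, hy0, hyn, hstep⟩ := ih i k (pos_iff_ne_zero.2 hk.1)
    refine ⟨fun m => if m = n + 1 then j else y m, by simpa using hy0, by simp, ?_⟩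
    intro m hm
    by_cases hmn : m < n
    · have h1 : m ≠ n + 1 := by omega
      have h2 : m + 1 ≠ n + 1 := by omega
      simpa [h1, h2, show m ≠ n by omega] using hstep m hmn
    · have hmeq : m = n := by omega
      subst hmeq
      have h1 : m ≠ m + 1 := by omega
      simp only [if_neg h1, if_pos rfl]
      rw [hyn]
      exact pos_iff_ne_zero.2 hk.2

end MatpowAux

section BridgeAux

lemma pijD_pos_iff (pm : 𝓨 → 𝓨 → ℝ≥0∞) (f : 𝓨 → 𝓧 → ℝ≥0∞) (q : 𝓧 × 𝓨 → 𝓧 × 𝓨 → ℝ≥0∞)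
    (hq : ∀ x i x' j, q (x', j) (x, i) = pm i j * f j x')
    (w : List (Set 𝓨)) (x : Fin (w.length + 1) → 𝓧)
    (hx : ∀ (k : ℕ) (hk : k < w.length) (s : 𝓨),
        0 < f s (x ⟨k + 1, by omega⟩) ↔ s ∈ w.getD k ∅)
    (i j : 𝓨) :
    0 < pijD q x i j ↔ j ∈ foldS (fun a b => 0 < pm a b) w {i} := by
  classical
  have h1 : 0 < pijD q x i j ↔ ∃ y : Fin (w.length + 1) → 𝓨, y 0 = i ∧
      y (Fin.last w.length) = j ∧
      ∀ k : Fin w.length, 0 < pm (y k.castSucc) (y k.succ) ∧ y k.succ ∈ w.getD k.val ∅ := by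
    rw [pos_iff_ne_zero]
    unfold pijD
    rw [Ne, Finset.sum_eq_zero_iff]
    push_neg
    constructor
    · rintro ⟨y, _, hy⟩
      by_cases hcond : y 0 = i ∧ y (Fin.last w.length) = j
      · rw [if_pos hcond] at hy
        refine ⟨y, hcond.1, hcond.2, ?_⟩
        intro k
        have hfac := (Finset.prod_ne_zero_iff.1 hy) k (Finset.mem_univ k)
        rw [hq (x k.castSucc) (y k.castSucc) (x k.succ) (y k.succ), mul_ne_zero_iff] at hfac
        refine ⟨pos_iff_ne_zero.2 hfac.1, ?_⟩
        exact (hx k.val k.isLt (y k.succ)).1 (pos_iff_ne_zero.2 hfac.2)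
      · rw [if_neg hcond] at hy; exact absurd rfl hy
    · rintro ⟨y, hy0, hyl, hcond⟩
      refine ⟨y, Finset.mem_univ y, ?_⟩
      rw [if_pos ⟨hy0, hyl⟩, Finset.prod_ne_zero_iff]
      intro k _
      rw [hq (x k.castSucc) (y k.castSucc) (x k.succ) (y k.succ), mul_ne_zero_iff]
      refine ⟨pos_iff_ne_zero.1 (hcond k).1, pos_iff_ne_zero.1 ?_⟩
      exact (hx k.val k.isLt (y k.succ)).2 (hcond k).2
  rw [h1, foldS_eq_foldN, mem_foldN_iff_path]
  constructor
  · rintro ⟨y, hy0, hyl, hcond⟩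
    refine ⟨fun m => y ⟨min m w.length, by omega⟩, ?_, ?_, ?_⟩
    · show y ⟨min 0 w.length, _⟩ ∈ ({i} : Set 𝓨)
      have e : (⟨min 0 w.length, by omega⟩ : Fin (w.length + 1)) = 0 := by
        apply Fin.ext; simp
      rw [e, hy0]; rfl
    · show y ⟨min w.length w.length, _⟩ = j
      have e : (⟨min w.length w.length, by omega⟩ : Fin (w.length + 1)) = Fin.last w.length := by
        apply Fin.ext; simp
      rw [e, hyl]
    · intro k hk
      have e1 : (⟨min k w.length, by omega⟩ : Fin (w.length + 1))
          = (⟨k, hk⟩ : Fin w.length).castSucc := by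
        apply Fin.ext
        simp [Nat.min_eq_left (le_of_lt hk)]
      have e2 : (⟨min (k + 1) w.length, by omega⟩ : Fin (w.length + 1))
          = (⟨k, hk⟩ : Fin w.length).succ := by
        apply Fin.ext
        simp [Nat.min_eq_left hk]
      show 0 < pm (y ⟨min k w.length, _⟩) (y ⟨min (k+1) w.length, _⟩) ∧
        y ⟨min (k+1) w.length, _⟩ ∈ w.getD k ∅
      rw [e1, e2]
      exact hcond ⟨k, hk⟩
  · rintro ⟨y, hy0, hyl, hcond⟩
    refine ⟨fun m => y m.val, ?_, ?_, ?_⟩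
    · show y (0 : Fin (w.length + 1)).val = i
      rw [Fin.val_zero]
      exact hy0
    · show y (Fin.last w.length).val = j
      rw [Fin.val_last]
      exact hyl
    · intro k
      have h := hcond k.val k.isLt
      constructor
      · show 0 < pm (y k.castSucc.val) (y k.succ.val)
        rw [Fin.coe_castSucc, Fin.val_succ]
        exact h.1
      · show y k.succ.val ∈ w.getD k.val ∅
        rw [Fin.val_succ]
        exact h.2

end BridgeAux

section ClusterAux

/-- The set of points whose emission-support profile is exactly `C`. -/
def DCset (f : 𝓨 → 𝓧 → ℝ≥0∞) (C : Set 𝓨) : Set 𝓧 := {x | ∀ s : 𝓨, 0 < f s x ↔ s ∈ C}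

lemma measurableSet_DCset {f : 𝓨 → 𝓧 → ℝ≥0∞} (hfm : ∀ s, Measurable (f s)) (C : Set 𝓨) :
    MeasurableSet (DCset f C) := by
  have : DCset f C = ⋂ s : 𝓨, {x | 0 < f s x ↔ s ∈ C} := by
    ext x; simp [DCset, Set.mem_iInter]
  rw [this]
  refine MeasurableSet.iInter fun s => ?_
  by_cases hs : s ∈ C
  · have : {x | 0 < f s x ↔ s ∈ C} = {x | 0 < f s x} := by
      ext x; simp [hs]
    rw [this]
    exact measurableSet_lt measurable_const (hfm s)
  · have : {x | 0 < f s x ↔ s ∈ C} = {x | 0 < f s x}ᶜ := by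
      ext x; simp [hs]
    rw [this]
    exact (measurableSet_lt measurable_const (hfm s)).compl

lemma exists_cluster {μ : Measure 𝓧} {f : 𝓨 → 𝓧 → ℝ≥0∞}
    (hGpos : ∀ s : 𝓨, 0 < μ {x | 0 < f s x}) (s : 𝓨) :
    ∃ C : Set 𝓨, 0 < μ (DCset f C) ∧ s ∈ C := by
  by_contra hno
  push_neg at hno
  have hsub : {x | 0 < f s x} ⊆ ⋃ C ∈ {C : Set 𝓨 | s ∈ C}, DCset f C := by
    intro x hx
    exact Set.mem_biUnion (show ({t : 𝓨 | 0 < f t x}) ∈ {C : Set 𝓨 | s ∈ C} from hx)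
      (fun t => Iff.rfl)
  have hz : μ (⋃ C ∈ {C : Set 𝓨 | s ∈ C}, DCset f C) = 0 := by
    refine (measure_biUnion_null_iff (Set.to_countable _)).2 ?_
    intro C hC
    have := hno C
    by_contra hne
    exact absurd hC (by simpa using this (pos_iff_ne_zero.2 hne))
  have := measure_mono_null hsub hz
  exact absurd this (pos_iff_ne_zero.1 (hGpos s))

end ClusterAux

section MeasureAux

lemma count_apply_fintype (T : Set 𝓨) :
    Measure.count T = ∑ j : 𝓨, T.indicator (fun _ => (1 : ℝ≥0∞)) j := by
  have h := lintegral_indicator_one (μ := Measure.count) (Set.toFinite T).measurableSet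
  rw [lintegral_count, tsum_fintype] at h
  exact h.symm

lemma prodCount_apply (μ : Measure 𝓧) [SigmaFinite μ] {S : Set (𝓧 × 𝓨)}
    (hS : MeasurableSet S) :
    (μ.prod Measure.count) S = ∑ j : 𝓨, μ {x | (x, j) ∈ S} := by
  rw [Measure.prod_apply hS]
  have hpt : ∀ x : 𝓧, Measure.count (Prod.mk x ⁻¹' S)
      = ∑ j : 𝓨, ({x' | (x', j) ∈ S} : Set 𝓧).indicator (fun _ => (1 : ℝ≥0∞)) x := by
    intro x
    rw [count_apply_fintype]
    refine Finset.sum_congr rfl fun j _ => ?_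
    by_cases h : (x, j) ∈ S <;> simp [Set.indicator_apply, h, Set.mem_preimage]
  simp_rw [hpt]
  have hms : ∀ j : 𝓨, MeasurableSet {x' : 𝓧 | (x', j) ∈ S} :=
    fun j => (measurable_id.prodMk measurable_const) hS
  rw [show (∫⁻ x, ∑ j : 𝓨, ({x' | (x', j) ∈ S} : Set 𝓧).indicator (fun _ => (1 : ℝ≥0∞)) x ∂μ)
      = ∑ j : 𝓨, ∫⁻ x, ({x' | (x', j) ∈ S} : Set 𝓧).indicator (fun _ => (1 : ℝ≥0∞)) x ∂μ from
    lintegral_finset_sum _ (fun j _ => measurable_const.indicator (hms j))]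
  congr 1
  ext j
  rw [lintegral_indicator (hms j) (fun _ => (1 : ℝ≥0∞))]
  simp

lemma lintegral_prodCount (μ : Measure 𝓧) [SigmaFinite μ] {g : 𝓧 × 𝓨 → ℝ≥0∞}
    (hg : Measurable g) :
    ∫⁻ z, g z ∂(μ.prod Measure.count) = ∑ j : 𝓨, ∫⁻ x, g (x, j) ∂μ := by
  rw [MeasureTheory.lintegral_prod _ hg.aemeasurable]
  have hpt : ∀ x : 𝓧, ∫⁻ y, g (x, y) ∂Measure.count = ∑ j : 𝓨, g (x, j) := by
    intro x
    rw [MeasureTheory.lintegral_count, tsum_fintype]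
  simp_rw [hpt]
  exact lintegral_finset_sum _ fun j _ => hg.comp (measurable_id.prodMk measurable_const)

end MeasureAux

section KernelAux

lemma kappa_lintegral (μ : Measure 𝓧) [SigmaFinite μ] (κ : Kernel (𝓧 × 𝓨) (𝓧 × 𝓨))
    (q : 𝓧 × 𝓨 → 𝓧 × 𝓨 → ℝ≥0∞) (pm : 𝓨 → 𝓨 → ℝ≥0∞) (f : 𝓨 → 𝓧 → ℝ≥0∞)
    (hκ : ∀ z, (κ z : Measure (𝓧 × 𝓨)) = (μ.prod Measure.count).withDensity (fun z' => q z' z))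
    (hqm : Measurable (Function.uncurry q))
    (hq : ∀ x i x' j, q (x', j) (x, i) = pm i j * f j x')
    (hfm : ∀ j, Measurable (f j))
    (x : 𝓧) (i : 𝓨) {g : 𝓧 × 𝓨 → ℝ≥0∞} (hg : Measurable g) :
    ∫⁻ w, g w ∂(κ (x, i)) = ∑ j : 𝓨, pm i j * ∫⁻ x', f j x' * g (x', j) ∂μ := by
  rw [hκ]
  have hdm : Measurable (fun z' => q z' (x, i)) :=
    hqm.comp (measurable_id.prodMk measurable_const)
  rw [lintegral_withDensity_eq_lintegral_mul _ hdm hg]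
  simp only [Pi.mul_apply]
  rw [lintegral_prodCount μ (g := fun z => q z (x, i) * g z) (hdm.mul hg)]
  refine Finset.sum_congr rfl fun j _ => ?_
  have hpt : ∀ x' : 𝓧, q (x', j) (x, i) * g (x', j)
      = pm i j * (f j x' * g (x', j)) := by
    intro x'
    rw [hq x i x' j, mul_assoc]
  simp_rw [hpt]
  have hm : Measurable (fun x' : 𝓧 => f j x' * g (x', j)) :=
    (hfm j).mul (hg.comp (measurable_id.prodMk measurable_const))
  exact lintegral_const_mul _ hm

lemma kpow_formula (μ : Measure 𝓧) [SigmaFinite μ] (κ : Kernel (𝓧 × 𝓨) (𝓧 × 𝓨))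
    (q : 𝓧 × 𝓨 → 𝓧 × 𝓨 → ℝ≥0∞) (pm : 𝓨 → 𝓨 → ℝ≥0∞) (f : 𝓨 → 𝓧 → ℝ≥0∞)
    (hκ : ∀ z, (κ z : Measure (𝓧 × 𝓨)) = (μ.prod Measure.count).withDensity (fun z' => q z' z))
    (hqm : Measurable (Function.uncurry q))
    (hq : ∀ x i x' j, q (x', j) (x, i) = pm i j * f j x')
    (hfm : ∀ j, Measurable (f j))
    (hfint : ∀ j, ∫⁻ x', f j x' ∂μ = 1) :
    ∀ (n : ℕ) (x : 𝓧) (i : 𝓨) (A : Set (𝓧 × 𝓨)), MeasurableSet A →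
    kpow κ (n + 1) (x, i) A
      = ∑ j : 𝓨, matpow pm (n + 1) i j * ∫⁻ x' in {x' | (x', j) ∈ A}, f j x' ∂μ := by
  intro n
  induction n with
  | zero =>
    intro x i A hA
    have h1 : kpow κ 1 = κ := by
      show Kernel.id ∘ₖ κ = κ
      exact Kernel.id_comp κ
    rw [h1]
    have h2 : (κ (x, i)) A = ∫⁻ w, A.indicator (fun _ => (1 : ℝ≥0∞)) w ∂(κ (x, i)) :=
      (lintegral_indicator_one hA).symm
    rw [h2, kappa_lintegral μ κ q pm f hκ hqm hq hfm x i (measurable_const.indicator hA)]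
    refine Finset.sum_congr rfl fun j _ => ?_
    rw [matpow_one]
    congr 1
    have hpt : ∀ x' : 𝓧, f j x' * A.indicator (fun _ => (1 : ℝ≥0∞)) (x', j)
        = ({x' | (x', j) ∈ A}).indicator (f j) x' := by
      intro x'
      by_cases h : (x', j) ∈ A <;> simp [Set.indicator_apply, h]
    simp_rw [hpt]
    exact lintegral_indicator ((measurable_id.prodMk measurable_const) hA) (f j)
  | succ n ih =>
    intro x i A hA
    have h1 : kpow κ (n + 2) (x, i) A = ∫⁻ w, kpow κ (n + 1) w A ∂(κ (x, i)) := by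
      show (kpow κ (n + 1) ∘ₖ κ) (x, i) A = _
      exact Kernel.comp_apply' _ _ _ hA
    rw [h1, kappa_lintegral μ κ q pm f hκ hqm hq hfm x i (Kernel.measurable_coe _ hA)]
    have h2 : ∀ (j' : 𝓨) (x' : 𝓧), f j' x' * kpow κ (n + 1) (x', j') A
        = f j' x' * ∑ j : 𝓨, matpow pm (n + 1) j' j
            * ∫⁻ x'' in {x'' | (x'', j) ∈ A}, f j x'' ∂μ := by
      intro j' x'; rw [ih x' j' A hA]
    simp_rw [h2]
    have h3 : ∀ j' : 𝓨, ∫⁻ x', f j' x' * (∑ j : 𝓨, matpow pm (n + 1) j' j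
          * ∫⁻ x'' in {x'' | (x'', j) ∈ A}, f j x'' ∂μ) ∂μ
        = ∑ j : 𝓨, matpow pm (n + 1) j' j * ∫⁻ x'' in {x'' | (x'', j) ∈ A}, f j x'' ∂μ := by
      intro j'
      rw [lintegral_mul_const _ (hfm j'), hfint j', one_mul]
    simp_rw [h3]
    calc ∑ j' : 𝓨, pm i j' * ∑ j : 𝓨, matpow pm (n + 1) j' j
            * ∫⁻ x'' in {x'' | (x'', j) ∈ A}, f j x'' ∂μ
        = ∑ j' : 𝓨, ∑ j : 𝓨, pm i j' * (matpow pm (n + 1) j' j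
            * ∫⁻ x'' in {x'' | (x'', j) ∈ A}, f j x'' ∂μ) := by
          simp_rw [Finset.mul_sum]
      _ = ∑ j : 𝓨, ∑ j' : 𝓨, pm i j' * (matpow pm (n + 1) j' j
            * ∫⁻ x'' in {x'' | (x'', j) ∈ A}, f j x'' ∂μ) := Finset.sum_comm
      _ = ∑ j : 𝓨, (∑ j' : 𝓨, pm i j' * matpow pm (n + 1) j' j)
            * ∫⁻ x'' in {x'' | (x'', j) ∈ A}, f j x'' ∂μ := by
          simp_rw [← mul_assoc, Finset.sum_mul]
      _ = ∑ j : 𝓨, matpow pm (n + 2) i j * ∫⁻ x'' in {x'' | (x'', j) ∈ A}, f j x'' ∂μ := by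
          refine Finset.sum_congr rfl fun j _ => ?_
          rw [matpow_succ_left pm (n + 1) i j]

end KernelAux
/-- Proposition 4. Let `Z` be a hidden Markov model whose transition
matrix `ℙ` is irreducible and has at least one row with all entries strictly positive.
Then **A1** and **A2** hold. -/
theorem hmm_positive_row_implies_A1_A2
    [TopologicalSpace 𝓧] [PolishSpace 𝓧] [BorelSpace 𝓧]
    (P : Measure Ω) (Z : ℕ → Ω → 𝓧 × 𝓨) (κ : Kernel (𝓧 × 𝓨) (𝓧 × 𝓨)) (μ : Measure 𝓧)
    (q : 𝓧 × 𝓨 → 𝓧 × 𝓨 → ℝ≥0∞) (p0 : 𝓧 × 𝓨 → ℝ≥0∞)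
    (pm : 𝓨 → 𝓨 → ℝ≥0∞) (f : 𝓨 → 𝓧 → ℝ≥0∞)
    (hPMM : IsPMM P Z κ μ q p0)
    (hq : ∀ x i x' j, q (x', j) (x, i) = pm i j * f j x')
    (hstoch : ∀ i : 𝓨, ∑ j : 𝓨, pm i j = 1)
    (hf : ∀ j : 𝓨, ∫⁻ x', f j x' ∂μ = 1)
    (hirr : ∀ i j : 𝓨, ∃ n : ℕ, 1 ≤ n ∧ 0 < matpow pm n i j)
    (i₀ : 𝓨) (hrow : ∀ j : 𝓨, 0 < pm i₀ j) :
    ∃ (R : ℕ) (E : Set (Fin (R + 1) → 𝓧)) (Yp : Set (𝓨 × 𝓨)) (ψ : Measure (𝓧 × 𝓨)),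
      Assumption1 q E Yp ∧ Assumption2 κ ψ μ E Yp := by
  classical
  -- unpack the PMM structure
  obtain ⟨-, -, hσμ, hqm, -, hκd, -⟩ := hPMM
  haveI : SigmaFinite μ := hσμ
  -- 𝓧 is nonempty
  have hX : Nonempty 𝓧 := by
    by_contra h
    rw [not_nonempty_iff] at h
    have h1 := hf (Classical.arbitrary 𝓨)
    rw [μ.eq_zero_of_isEmpty, lintegral_zero_measure] at h1
    exact zero_ne_one h1
  obtain ⟨x₀⟩ := hX
  -- the entries of pm are finite
  have hpmtop : ∀ i j : 𝓨, pm i j ≠ ⊤ := by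
    intro i j
    have hle : pm i j ≤ 1 := by
      rw [← hstoch i]
      exact Finset.single_le_sum (fun k _ => zero_le) (Finset.mem_univ j)
    exact ne_top_of_le_ne_top one_ne_top hle
  -- the emission densities are measurable
  have hfm : ∀ j : 𝓨, Measurable (f j) := by
    intro j
    have heq : f j = fun x' => (pm i₀ j)⁻¹ * q (x', j) (x₀, i₀) := by
      funext x'
      rw [hq x₀ i₀ x' j, ← mul_assoc,
        ENNReal.inv_mul_cancel (pos_iff_ne_zero.1 (hrow j)) (hpmtop i₀ j), one_mul]
    rw [heq]
    exact measurable_const.mul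
      (hqm.comp ((measurable_id.prodMk measurable_const).prodMk measurable_const))
  -- the emission supports have positive measure
  have hGpos : ∀ s : 𝓨, 0 < μ {x | 0 < f s x} := by
    intro s
    rw [pos_iff_ne_zero]
    intro h0
    have hae : f s =ᵐ[μ] 0 := by
      rw [Filter.EventuallyEq, ae_iff]
      exact measure_mono_null (fun x hx => pos_iff_ne_zero.2 hx) h0
    have h1 := (lintegral_eq_zero_iff (hfm s)).2 hae
    rw [hf s] at h1
    exact one_ne_zero h1
  -- cluster system
  set 𝒞 : Set (Set 𝓨) := {C : Set 𝓨 | 0 < μ (DCset f C)} with h𝒞def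
  have hcl : ∀ s : 𝓨, ∃ C ∈ 𝒞, s ∈ C := by
    intro s
    obtain ⟨C, hC, hsC⟩ := exists_cluster hGpos s
    exact ⟨C, hC, hsC⟩
  -- the positivity relation and paths from irreducibility
  set rpos : 𝓨 → 𝓨 → Prop := fun a b => 0 < pm a b with hrposdef
  have hpath : ∀ i j : 𝓨, ∃ (n : ℕ) (y : ℕ → 𝓨), y 0 = i ∧ y n = j ∧
      ∀ k < n, rpos (y k) (y (k + 1)) := by
    intro i j
    obtain ⟨n, -, hpos⟩ := hirr i j
    obtain ⟨y, hy0, hyn, hstep⟩ := matpow_pos_path pm n i j hpos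
    exact ⟨n, y, hy0, hyn, hstep⟩
  have hrow' : ∀ j : 𝓨, rpos i₀ j := hrow
  obtain ⟨Cst, hCstpos, hiCst⟩ := exists_cluster hGpos i₀
  -- the good word
  obtain ⟨w, hwne, hwcl, ⟨iw, hiw⟩, hgood⟩ :=
    exists_good_word rpos 𝒞 i₀ Cst hcl hCstpos hiCst hrow' hpath
  have hR1 : 1 ≤ w.length := List.length_pos_iff.2 hwne
  -- positivity of the chosen clusters
  have hDpos : ∀ (k : ℕ), k < w.length → 0 < μ (DCset f (w.getD k ∅)) := by
    intro k hk
    have hmem : w.getD k ∅ ∈ w := by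
      rw [List.getD_eq_getElem w ∅ hk]
      exact List.getElem_mem hk
    exact hwcl _ hmem
  -- the set E
  set E : Set (Fin (w.length + 1) → 𝓧) :=
    {x | ∀ (k : ℕ) (hk : k < w.length), x ⟨k + 1, by omega⟩ ∈ DCset f (w.getD k ∅)}
    with hEdef
  -- the sets A and B
  set B : Set 𝓨 := foldS rpos w {iw} with hBdef
  set Aset : Set 𝓨 := {i : 𝓨 | (foldS rpos w {i}).Nonempty} with hAdef
  have hBne : B.Nonempty := hiw
  have hAne : Aset.Nonempty := ⟨iw, hiw⟩
  have hfoldB : ∀ i : 𝓨, i ∈ Aset → foldS rpos w {i} = B :=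
    fun i hi => hgood i iw hi hiw
  -- Yplus is constant on E
  have hYplus : ∀ x ∈ E, Yplus q x = Aset ×ˢ B := by
    intro x hxE
    ext p
    obtain ⟨i, j⟩ := p
    show 0 < pijD q x i j ↔ (i, j) ∈ Aset ×ˢ B
    rw [pijD_pos_iff pm f q hq w x (fun k hk s => hxE k hk s) i j]
    constructor
    · intro hj
      have hne : (foldS rpos w {i}).Nonempty := ⟨j, hj⟩
      exact ⟨hne, (hfoldB i hne) ▸ hj⟩
    · rintro ⟨hi, hj⟩
      rw [hfoldB i hi]
      exact hj
  -- the measure ψ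
  set Gz : Set (𝓧 × 𝓨) := {z : 𝓧 × 𝓨 | 0 < f z.2 z.1} with hGzdef
  have hGzm : MeasurableSet Gz := by
    have hGeq : Gz = ⋃ j : 𝓨, {x | 0 < f j x} ×ˢ ({j} : Set 𝓨) := by
      ext z
      simp only [hGzdef, Set.mem_setOf_eq, Set.mem_iUnion, Set.mem_prod,
        Set.mem_singleton_iff]
      constructor
      · intro h; exact ⟨z.2, h, rfl⟩
      · rintro ⟨j, hj, hz⟩; rw [hz]; exact hj
    rw [hGeq]
    exact MeasurableSet.iUnion fun j =>
      (measurableSet_lt measurable_const (hfm j)).prod (measurableSet_singleton j)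
  set ψ : Measure (𝓧 × 𝓨) := (μ.prod Measure.count).restrict Gz with hψdef
  have hψapply : ∀ {A : Set (𝓧 × 𝓨)}, MeasurableSet A →
      ψ A = ∑ j : 𝓨, μ ({x' | (x', j) ∈ A} ∩ {x' | 0 < f j x'}) := by
    intro A hA
    rw [hψdef, Measure.restrict_apply hA, prodCount_apply μ (hA.inter hGzm)]
    rfl
  -- the set-section integral vanishing characterization
  have hInt_zero : ∀ (A : Set (𝓧 × 𝓨)) (j : 𝓨),
      μ ({x' | (x', j) ∈ A} ∩ {x' | 0 < f j x'}) = 0 →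
      ∫⁻ x' in {x' | (x', j) ∈ A}, f j x' ∂μ = 0 := by
    intro A j hz
    rw [lintegral_eq_zero_iff (hfm j), Filter.EventuallyEq, ae_iff]
    have hseteq : {x | ¬ f j x = (0 : 𝓧 → ℝ≥0∞) x} = {x' | 0 < f j x'} := by
      ext x'
      simp [pos_iff_ne_zero]
    rw [hseteq, Measure.restrict_apply (measurableSet_lt measurable_const (hfm j))]
    rwa [Set.inter_comm] at hz
  have hInt_pos : ∀ (A : Set (𝓧 × 𝓨)) (j : 𝓨),
      0 < μ ({x' | (x', j) ∈ A} ∩ {x' | 0 < f j x'}) →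
      0 < ∫⁻ x' in {x' | (x', j) ∈ A}, f j x' ∂μ := by
    intro A j hz
    rw [pos_iff_ne_zero]
    intro h0
    have hae := (lintegral_eq_zero_iff (hfm j)).1 h0
    rw [Filter.EventuallyEq, ae_iff] at hae
    have hseteq : {x | ¬ f j x = (0 : 𝓧 → ℝ≥0∞) x} = {x' | 0 < f j x'} := by
      ext x'
      simp [pos_iff_ne_zero]
    rw [hseteq, Measure.restrict_apply (measurableSet_lt measurable_const (hfm j))] at hae
    rw [Set.inter_comm] at hae
    rw [hae] at hz
    exact lt_irrefl 0 hz
  -- ψ is an irreducibility measure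
  have hψirr : IsIrreducibilityMeasure κ ψ := by
    intro A hA hpos z
    obtain ⟨x, i⟩ := z
    rw [hψapply hA] at hpos
    obtain ⟨j₀, -, hj₀⟩ :=
      Finset.exists_ne_zero_of_sum_ne_zero (pos_iff_ne_zero.1 hpos)
    have hI : 0 < ∫⁻ x' in {x' | (x', j₀) ∈ A}, f j₀ x' ∂μ :=
      hInt_pos A j₀ (pos_iff_ne_zero.2 hj₀)
    obtain ⟨n, hn1, hmp⟩ := hirr i j₀
    obtain ⟨m, rfl⟩ : ∃ m, n = m + 1 := ⟨n - 1, by omega⟩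
    refine ⟨m + 1, by omega, ?_⟩
    rw [kpow_formula μ κ q pm f hκd hqm hq hfm hf m x i A hA]
    calc (0 : ℝ≥0∞)
        < matpow pm (m + 1) i j₀ * ∫⁻ x' in {x' | (x', j₀) ∈ A}, f j₀ x' ∂μ :=
          ENNReal.mul_pos (pos_iff_ne_zero.1 hmp) (pos_iff_ne_zero.1 hI)
      _ ≤ ∑ j : 𝓨, matpow pm (m + 1) i j * ∫⁻ x' in {x' | (x', j) ∈ A}, f j x' ∂μ :=
          Finset.single_le_sum
            (f := fun j : 𝓨 => matpow pm (m + 1) i j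
              * ∫⁻ x' in {x' | (x', j) ∈ A}, f j x' ∂μ)
            (fun k _ => zero_le) (Finset.mem_univ j₀)
  -- ψ is maximal
  have hψmax : ∀ φ : Measure (𝓧 × 𝓨), SigmaFinite φ → IsIrreducibilityMeasure κ φ →
      φ ≪ ψ := by
    intro φ _ hφ
    refine Measure.AbsolutelyContinuous.mk ?_
    intro A hA h0
    by_contra hne
    obtain ⟨k, hk1, hk⟩ := hφ A hA (pos_iff_ne_zero.2 hne)
      (x₀, Classical.arbitrary 𝓨)
    obtain ⟨m, rfl⟩ : ∃ m, k = m + 1 := ⟨k - 1, by omega⟩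
    rw [kpow_formula μ κ q pm f hκd hqm hq hfm hf m x₀ (Classical.arbitrary 𝓨) A hA] at hk
    rw [hψapply hA] at h0
    have hzero : ∀ j : 𝓨, μ ({x' | (x', j) ∈ A} ∩ {x' | 0 < f j x'}) = 0 := by
      intro j
      exact (Finset.sum_eq_zero_iff.1 h0) j (Finset.mem_univ j)
    have hsz : ∑ j : 𝓨, matpow pm (m + 1) (Classical.arbitrary 𝓨) j
        * ∫⁻ x' in {x' | (x', j) ∈ A}, f j x' ∂μ = 0 :=
      Finset.sum_eq_zero fun j _ => by rw [hInt_zero A j (hzero j), mul_zero]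
    rw [hsz] at hk
    exact lt_irrefl 0 hk
  -- nonemptiness of the cluster sets along the word
  have hDne : ∀ k : Fin w.length, (DCset f (w.getD k.val ∅)).Nonempty := by
    intro k
    rcases Set.eq_empty_or_nonempty (DCset f (w.getD k.val ∅)) with h | h
    · exfalso
      have := hDpos k.val k.isLt
      rw [h, measure_empty] at this
      exact lt_irrefl 0 this
    · exact h
  choose d hd using hDne
  -- proj1 E is everything
  have hproj : proj1 E = Set.univ := by
    ext a
    simp only [proj1, Set.mem_image, Set.mem_univ, iff_true]
    refine ⟨Fin.cons a d, ?_, ?_⟩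
    · intro k hk
      have he : (⟨k + 1, by omega⟩ : Fin (w.length + 1)) = Fin.succ ⟨k, hk⟩ := rfl
      rw [he, Fin.cons_succ]
      exact hd ⟨k, hk⟩
    · simp
  refine ⟨w.length, E, Aset ×ˢ B, ψ, ⟨hR1, ?_, hYplus, ?_⟩, ⟨⟨?_, hψirr, hψmax⟩, ?_, ?_⟩⟩
  · -- Yp nonempty
    obtain ⟨b, hb⟩ := hBne
    exact ⟨(iw, b), hiw, hb⟩
  · -- product structure
    rw [Set.fst_image_prod _ hBne, Set.snd_image_prod hAne]
  · -- σ-finiteness of ψ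
    rw [hψdef]
    infer_instance
  · -- ψ of proj1 E ×ˢ A is positive
    rw [hproj, Set.fst_image_prod _ hBne]
    have hAm : MeasurableSet Aset := (Set.toFinite Aset).measurableSet
    rw [hψdef, Measure.restrict_apply (MeasurableSet.univ.prod hAm)]
    have hsub : ({x | 0 < f iw x} ×ˢ ({iw} : Set 𝓨)) ⊆ (Set.univ ×ˢ Aset) ∩ Gz := by
      rintro ⟨x', j'⟩ ⟨hx', hj'⟩
      rw [Set.mem_singleton_iff] at hj'
      subst hj'
      exact ⟨⟨trivial, hiw⟩, hx'⟩
    refine lt_of_lt_of_le ?_ (measure_mono hsub)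
    rw [Measure.prod_prod, Measure.count_singleton, mul_one]
    exact hGpos iw
  · -- sections of E have positive measure
    intro x₁ hx₁
    have hsec : secSet E x₁
        = Set.pi Set.univ (fun k : Fin w.length => DCset f (w.getD k.val ∅)) := by
      ext xr
      simp only [secSet, Set.mem_setOf_eq, Set.mem_pi, Set.mem_univ, forall_true_left]
      constructor
      · intro h k
        have hk := h k.val k.isLt
        have he : (⟨k.val + 1, by omega⟩ : Fin (w.length + 1)) = Fin.succ k := rfl
        rwa [he, Fin.cons_succ] at hk
      · intro h k hk
        have he : (⟨k + 1, by omega⟩ : Fin (w.length + 1)) = Fin.succ ⟨k, hk⟩ := rfl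
        rw [he, Fin.cons_succ]
        exact h ⟨k, hk⟩
    rw [hsec, Measure.pi_pi]
    rw [CanonicallyOrderedAdd.prod_pos]
    exact fun k _ => hDpos k.val k.isLt


end PMMPaper
end

section
/- Let Z be a Harris recurrent Markov chain on Z with maximal irreducibility measure ψ. If a measurable set W ⊂ Z^n, n ≥ 2, satisfies ψ(W_(1)) > 0 and P_z(Z_{1:n} ∈ W) > 0 for all z ∈ W_(1) (where W_(1) := {z₁ : z_{1:n} ∈ W} is the first-coordinate projection), then for every z ∈ Z, P_z(Z_{l:l+n-1} ∈ W for infinitely many l) = 1. -/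
open MeasureTheory ProbabilityTheory ENNReal

namespace PMMPaper

/-! ### Pairwise Markov models -/

variable {𝓧 : Type*} [MeasurableSpace 𝓧] {𝓨 : Type*} [Fintype 𝓨] [DecidableEq 𝓨]
  [MeasurableSpace 𝓨] [MeasurableSingletonClass 𝓨] [Nonempty 𝓨]
  {Ω : Type*} [MeasurableSpace Ω]

section LemmaA1Aux

section
variable {S : Type*} [MeasurableSpace S]

def Filt (S : Type*) [MeasurableSpace S] (m : ℕ) : MeasurableSpace (ℕ → S) :=
  ⨆ i ∈ Set.Iic m, MeasurableSpace.comap (fun ω : ℕ → S => ω i) inferInstance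

lemma Filt_le_pi (m : ℕ) : Filt S m ≤ MeasurableSpace.pi :=
  iSup_le fun i => iSup_le fun _ => (measurable_pi_apply i).comap_le

lemma Filt_mono {m m' : ℕ} (h : m ≤ m') : Filt S m ≤ Filt S m' :=
  iSup_le fun i => iSup_le fun hi =>
    le_iSup_of_le i (le_iSup_of_le (Set.Iic_subset_Iic.2 h hi) le_rfl)

lemma comap_le_filt {m i : ℕ} (hi : i ≤ m) :
    MeasurableSpace.comap (fun ω : ℕ → S => ω i) inferInstance ≤ Filt S m :=
  le_iSup₂ (f := fun (i : ℕ) (_ : i ∈ Set.Iic m) =>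
    MeasurableSpace.comap (fun ω : ℕ → S => ω i) inferInstance) i hi

lemma measurableSet_eval {m i : ℕ} (hi : i ≤ m) {A : Set S} (hA : MeasurableSet A) :
    MeasurableSet[Filt S m] ((fun ω : ℕ → S => ω i) ⁻¹' A) :=
  comap_le_filt hi _ ⟨A, hA, rfl⟩

lemma measurable_eval_filt {m i : ℕ} (hi : i ≤ m) :
    Measurable[Filt S m] (fun ω : ℕ → S => ω i) :=
  fun _A hA => measurableSet_eval hi hA

def seg (m j : ℕ) (ω : ℕ → S) : Fin (j + 1) → S := fun i => ω (m + (i : ℕ))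

lemma measurable_seg (m j : ℕ) : Measurable (seg (S := S) m j) :=
  measurable_pi_lambda _ fun _ => measurable_pi_apply _

lemma measurable_seg_filt {m j T : ℕ} (h : m + j ≤ T) :
    Measurable[Filt S T] (seg (S := S) m j) := by
  rw [measurable_iff_comap_le]
  show MeasurableSpace.comap _
    (⨆ a, MeasurableSpace.comap (fun w : Fin (j + 1) → S => w a) inferInstance) ≤ _
  rw [MeasurableSpace.comap_iSup]
  refine iSup_le fun a => ?_
  rw [MeasurableSpace.comap_comp]
  exact comap_le_filt (show m + (a : ℕ) ≤ T by have := a.2; omega)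

lemma measurable_snoc_pair (j : ℕ) :
    Measurable (fun p : (Fin (j + 1) → S) × S => (Fin.snoc p.1 p.2 : Fin (j + 2) → S)) := by
  refine measurable_pi_lambda _ fun i => ?_
  induction i using Fin.lastCases with
  | last => simpa using measurable_snd
  | cast k =>
      simp only [Fin.snoc_castSucc]
      exact (measurable_pi_apply k).comp measurable_fst

lemma measurable_snoc_right {j : ℕ} (w : Fin (j + 1) → S) :
    Measurable (fun s : S => (Fin.snoc w s : Fin (j + 2) → S)) :=
  (measurable_snoc_pair j).comp measurable_prodMk_left

variable (κ : Kernel S S)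

noncomputable def pk (j : ℕ) (f : (Fin (j + 2) → S) → ℝ≥0∞) : (Fin (j + 1) → S) → ℝ≥0∞ :=
  fun w => ∫⁻ s', f (Fin.snoc w s') ∂(κ (w (Fin.last j)))

variable [IsMarkovKernel κ]

lemma pk_meas {j : ℕ} {f : (Fin (j + 2) → S) → ℝ≥0∞} (hf : Measurable f) :
    Measurable (pk κ j f) := by
  have hker : Measurable fun w : Fin (j + 1) → S => w (Fin.last j) := measurable_pi_apply _
  have h : Measurable (Function.uncurry fun (w : Fin (j + 1) → S) (s' : S) =>
      f (Fin.snoc w s')) := hf.comp (measurable_snoc_pair j)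
  have h2 := h.lintegral_kernel_prod_right
    (κ := Kernel.comap κ (fun w : Fin (j + 1) → S => w (Fin.last j)) hker)
  simp [Kernel.comap_apply] at h2
  exact h2

noncomputable def iterK : (j : ℕ) → ((Fin (j + 1) → S) → ℝ≥0∞) → S → ℝ≥0∞
  | 0 => fun f s => f (fun _ => s)
  | (j + 1) => fun f s => iterK j (pk κ j f) s

lemma iterK_meas : ∀ (j : ℕ) (f : (Fin (j + 1) → S) → ℝ≥0∞), Measurable f →
    Measurable (iterK κ j f)
  | 0, _, hf => hf.comp (measurable_pi_lambda _ fun _ => measurable_id)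
  | (j + 1), _, hf => iterK_meas j _ (pk_meas κ hf)

lemma meas_sec {j : ℕ} {D : Set (Fin (j + 2) → S)} (hD : MeasurableSet D) (m : ℕ) :
    Measurable (fun ω : ℕ → S =>
      κ (ω (m + j)) {s' | Fin.snoc (seg m j ω) s' ∈ D}) := by
  have hker : Measurable fun w : Fin (j + 1) → S => w (Fin.last j) := measurable_pi_apply _
  set κ₂ := Kernel.comap κ (fun w : Fin (j + 1) → S => w (Fin.last j)) hker with hκ₂
  haveI : IsMarkovKernel κ₂ := by rw [hκ₂]; infer_instance
  have hT : MeasurableSet ((fun p : (Fin (j + 1) → S) × S =>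
      (Fin.snoc p.1 p.2 : Fin (j + 2) → S)) ⁻¹' D) := (measurable_snoc_pair j) hD
  have h1 : Measurable (fun w : Fin (j + 1) → S => κ₂ w {s' | Fin.snoc w s' ∈ D}) :=
    Kernel.measurable_kernel_prodMk_left (κ := κ₂) hT
  have h2 := h1.comp (measurable_seg (S := S) m j)
  have hlast : ∀ ω : ℕ → S, seg m j ω (Fin.last j) = ω (m + j) := by
    intro ω; simp [seg]
  have heq : (fun ω : ℕ → S => κ (ω (m + j)) {s' | Fin.snoc (seg m j ω) s' ∈ D})
      = (fun w : Fin (j + 1) → S => κ₂ w {s' | Fin.snoc w s' ∈ D}) ∘ seg m j := by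
    funext ω
    simp only [Function.comp_apply, hκ₂, Kernel.comap_apply, hlast]
  rw [heq]; exact h2

lemma lintegral_indicator_preimage (P : Measure (ℕ → S)) {α : Type*} [MeasurableSpace α]
    {g : (ℕ → S) → α} (hg : Measurable g) {D : Set α} (hD : MeasurableSet D)
    (C : Set (ℕ → S)) :
    ∫⁻ ω in C, D.indicator (fun _ => (1 : ℝ≥0∞)) (g ω) ∂P = P (g ⁻¹' D ∩ C) := by
  have h1 : (fun ω => D.indicator (fun _ => (1 : ℝ≥0∞)) (g ω))
      = (g ⁻¹' D).indicator (fun _ => (1 : ℝ≥0∞)) := by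
    funext ω; by_cases hω : g ω ∈ D <;> simp [hω, Set.indicator_apply, Set.mem_preimage]
  rw [h1, lintegral_indicator (hg hD), setLIntegral_one,
    Measure.restrict_apply (hg hD)]

variable (P : Measure (ℕ → S)) [IsProbabilityMeasure P]

/-- The one-step Markov property. -/
def MProp : Prop :=
  ∀ (n : ℕ) (g : S → ℝ≥0∞), Measurable g → ∀ C : Set (ℕ → S), MeasurableSet[Filt S n] C →
    ∫⁻ ω in C, g (ω (n + 1)) ∂P = ∫⁻ ω in C, ∫⁻ s', g s' ∂(κ (ω n)) ∂P

lemma rect_step (hMP : MProp κ P) (j m : ℕ) (C : Set (ℕ → S))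
    (hC : MeasurableSet[Filt S (m + j)] C) :
    ∀ D : Set (Fin (j + 2) → S), MeasurableSet D →
      P (seg m (j + 1) ⁻¹' D ∩ C)
        = ∫⁻ ω in C, κ (ω (m + j)) {s' | Fin.snoc (seg m j ω) s' ∈ D} ∂P := by
  have hCg : MeasurableSet C := Filt_le_pi _ _ hC
  refine MeasurableSpace.induction_on_inter generateFrom_pi.symm isPiSystem_pi ?_ ?_ ?_ ?_
  · simp
  · rintro t ⟨A, hA, rfl⟩
    have hAi : ∀ i, MeasurableSet (A i) := fun i => hA i (Set.mem_univ i)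
    set E' : Set (ℕ → S) :=
      ⋂ k : Fin (j + 1), (fun ω : ℕ → S => ω (m + (k : ℕ))) ⁻¹' A k.castSucc with hE'
    have hseg_last : ∀ ω : ℕ → S, seg m (j + 1) ω (Fin.last (j + 1)) = ω ((m + j) + 1) := by
      intro ω
      show ω (m + ((Fin.last (j + 1) : Fin (j + 2)) : ℕ)) = _
      rw [Fin.val_last, Nat.add_succ]
    have hseg_cast : ∀ (ω : ℕ → S) (k : Fin (j + 1)),
        seg m (j + 1) ω k.castSucc = ω (m + (k : ℕ)) := by
      intro ω k
      show ω (m + ((k.castSucc : Fin (j + 2)) : ℕ)) = _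
      rw [Fin.coe_castSucc]
    have hE'F : MeasurableSet[Filt S (m + j)] E' :=
      MeasurableSet.iInter fun k =>
        measurableSet_eval (by have := k.is_le; omega) (hAi _)
    have hE'g : MeasurableSet E' := Filt_le_pi _ _ hE'F
    have hkey : seg m (j + 1) ⁻¹' Set.univ.pi A ∩ C
        = (fun ω : ℕ → S => ω ((m + j) + 1)) ⁻¹' A (Fin.last (j + 1)) ∩ (C ∩ E') := by
      ext ω
      constructor
      · rintro ⟨h1, h2⟩
        have h1' : ∀ i : Fin (j + 2), seg m (j + 1) ω i ∈ A i := Set.mem_univ_pi.1 h1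
        refine ⟨?_, h2, Set.mem_iInter.2 fun k => ?_⟩
        · have := h1' (Fin.last (j + 1)); rwa [hseg_last] at this
        · have := h1' k.castSucc; rwa [hseg_cast] at this
      · rintro ⟨h1, h2, h3⟩
        refine ⟨Set.mem_univ_pi.2 fun i => ?_, h2⟩
        induction i using Fin.lastCases with
        | last => rw [hseg_last]; exact h1
        | cast k => rw [hseg_cast]; exact Set.mem_iInter.1 h3 k
    have hMPa := hMP (m + j) (Set.indicator (A (Fin.last (j + 1))) (fun _ => 1))
      (measurable_const.indicator (hAi _)) (C ∩ E') (hC.inter hE'F)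
    calc P (seg m (j + 1) ⁻¹' Set.univ.pi A ∩ C)
        = P ((fun ω : ℕ → S => ω ((m + j) + 1)) ⁻¹' A (Fin.last (j + 1)) ∩ (C ∩ E')) := by
          rw [hkey]
      _ = ∫⁻ ω in C ∩ E',
            Set.indicator (A (Fin.last (j + 1))) (fun _ => 1) (ω ((m + j) + 1)) ∂P :=
          (lintegral_indicator_preimage P (measurable_pi_apply _) (hAi _) _).symm
      _ = ∫⁻ ω in C ∩ E', ∫⁻ s',
            Set.indicator (A (Fin.last (j + 1))) (fun _ => 1) s' ∂(κ (ω (m + j))) ∂P := hMPa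
      _ = ∫⁻ ω in C ∩ E', κ (ω (m + j)) (A (Fin.last (j + 1))) ∂P := by
          refine lintegral_congr fun ω => ?_
          rw [lintegral_indicator_const (hAi _), one_mul]
      _ = ∫⁻ ω in C, E'.indicator (fun ω => κ (ω (m + j)) (A (Fin.last (j + 1)))) ω ∂P := by
          rw [lintegral_indicator hE'g, Measure.restrict_restrict hE'g, Set.inter_comm]
      _ = ∫⁻ ω in C, κ (ω (m + j)) {s' | Fin.snoc (seg m j ω) s' ∈ Set.univ.pi A} ∂P := by
          refine lintegral_congr fun ω => ?_
          by_cases hω : ω ∈ E'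
          · rw [Set.indicator_of_mem hω]
            congr 1
            ext s'
            constructor
            · intro hs'
              refine Set.mem_univ_pi.2 fun i => ?_
              induction i using Fin.lastCases with
              | last => rwa [Fin.snoc_last]
              | cast k =>
                  rw [Fin.snoc_castSucc]
                  exact Set.mem_iInter.1 hω k
            · intro hs'
              have := Set.mem_univ_pi.1 hs' (Fin.last (j + 1))
              rwa [Fin.snoc_last] at this
          · rw [Set.indicator_of_notMem hω]
            symm
            have hempty : {s' | Fin.snoc (seg m j ω) s' ∈ Set.univ.pi A} = (∅ : Set S) := by
              rw [Set.eq_empty_iff_forall_notMem]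
              intro s' hs'
              apply hω
              refine Set.mem_iInter.2 fun k => ?_
              have := Set.mem_univ_pi.1 hs' k.castSucc
              rwa [Fin.snoc_castSucc] at this
            rw [hempty, measure_empty]
  · intro t ht IH
    have hsec_t := meas_sec κ ht m
    have hsnoc_meas : ∀ ω : ℕ → S, MeasurableSet {s' | Fin.snoc (seg m j ω) s' ∈ t} :=
      fun ω => (measurable_snoc_right _) ht
    have key2 : ∀ ω : ℕ → S,
        κ (ω (m + j)) {s' | Fin.snoc (seg m j ω) s' ∈ t}
          + κ (ω (m + j)) {s' | Fin.snoc (seg m j ω) s' ∈ tᶜ} = 1 := by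
      intro ω
      have hcompl : {s' | Fin.snoc (seg m j ω) s' ∈ tᶜ}
          = {s' | Fin.snoc (seg m j ω) s' ∈ t}ᶜ := by
        ext s'; simp [Set.mem_compl_iff]
      rw [hcompl]
      rw [measure_add_measure_compl (hsnoc_meas ω)]
      exact measure_univ
    have hsum2 : (∫⁻ ω in C, κ (ω (m + j)) {s' | Fin.snoc (seg m j ω) s' ∈ t} ∂P)
        + (∫⁻ ω in C, κ (ω (m + j)) {s' | Fin.snoc (seg m j ω) s' ∈ tᶜ} ∂P) = P C := by
      rw [← lintegral_add_left hsec_t]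
      calc ∫⁻ ω in C, (κ (ω (m + j)) {s' | Fin.snoc (seg m j ω) s' ∈ t}
              + κ (ω (m + j)) {s' | Fin.snoc (seg m j ω) s' ∈ tᶜ}) ∂P
          = ∫⁻ _ in C, (1 : ℝ≥0∞) ∂P := lintegral_congr fun ω => key2 ω
        _ = P C := setLIntegral_one C
    have hsum1 : P (seg m (j + 1) ⁻¹' t ∩ C) + P (seg m (j + 1) ⁻¹' tᶜ ∩ C) = P C := by
      have htm : MeasurableSet (seg (S := S) m (j + 1) ⁻¹' t) := measurable_seg m (j + 1) ht
      have : seg (S := S) m (j + 1) ⁻¹' tᶜ ∩ C = C \ seg m (j + 1) ⁻¹' t := by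
        rw [Set.preimage_compl, Set.diff_eq, Set.inter_comm]
      rw [this, Set.inter_comm]
      exact measure_inter_add_diff C htm
    have hfin : P (seg m (j + 1) ⁻¹' t ∩ C) ≠ ∞ := (measure_lt_top P _).ne
    have hfin2 : (∫⁻ ω in C, κ (ω (m + j)) {s' | Fin.snoc (seg m j ω) s' ∈ t} ∂P) ≠ ∞ :=
      IH ▸ hfin
    rw [IH] at hsum1
    calc P (seg m (j + 1) ⁻¹' tᶜ ∩ C)
        = P C - (∫⁻ ω in C, κ (ω (m + j)) {s' | Fin.snoc (seg m j ω) s' ∈ t} ∂P) := by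
          rw [← hsum1, ENNReal.add_sub_cancel_left hfin2]
      _ = ∫⁻ ω in C, κ (ω (m + j)) {s' | Fin.snoc (seg m j ω) s' ∈ tᶜ} ∂P := by
          rw [← hsum2, ENNReal.add_sub_cancel_left hfin2]
  · intro f hdisj hfmeas hIH
    have hLHS : seg (S := S) m (j + 1) ⁻¹' (⋃ i, f i) ∩ C
        = ⋃ i, (seg m (j + 1) ⁻¹' f i ∩ C) := by
      rw [Set.preimage_iUnion, Set.iUnion_inter]
    have hdisj2 : Pairwise (Function.onFun Disjoint
        fun i => seg (S := S) m (j + 1) ⁻¹' f i ∩ C) := fun i i' hne =>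
      (((hdisj hne).preimage (seg m (j + 1))).mono Set.inter_subset_left Set.inter_subset_left)
    have hmeas2 : ∀ i, MeasurableSet (seg (S := S) m (j + 1) ⁻¹' f i ∩ C) :=
      fun i => (measurable_seg m (j + 1) (hfmeas i)).inter hCg
    rw [hLHS, measure_iUnion hdisj2 hmeas2]
    have hRHS : ∀ ω : ℕ → S, κ (ω (m + j)) {s' | Fin.snoc (seg m j ω) s' ∈ ⋃ i, f i}
        = ∑' i, κ (ω (m + j)) {s' | Fin.snoc (seg m j ω) s' ∈ f i} := by
      intro ω
      have : {s' | Fin.snoc (seg m j ω) s' ∈ ⋃ i, f i}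
          = ⋃ i, {s' | Fin.snoc (seg m j ω) s' ∈ f i} := by
        ext s'; simp [Set.mem_iUnion]
      rw [this]
      exact measure_iUnion
        (fun i i' hne => (hdisj hne).preimage _)
        (fun i => (measurable_snoc_right _) (hfmeas i))
    calc ∑' i, P (seg m (j + 1) ⁻¹' f i ∩ C)
        = ∑' i, ∫⁻ ω in C, κ (ω (m + j)) {s' | Fin.snoc (seg m j ω) s' ∈ f i} ∂P :=
          tsum_congr hIH
      _ = ∫⁻ ω in C, ∑' i, κ (ω (m + j)) {s' | Fin.snoc (seg m j ω) s' ∈ f i} ∂P :=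
          (lintegral_tsum fun i => (meas_sec κ (hfmeas i) m).aemeasurable).symm
      _ = ∫⁻ ω in C, κ (ω (m + j)) {s' | Fin.snoc (seg m j ω) s' ∈ ⋃ i, f i} ∂P :=
          lintegral_congr fun ω => (hRHS ω).symm

lemma step_f (hMP : MProp κ P) (j m : ℕ) (C : Set (ℕ → S))
    (hC : MeasurableSet[Filt S (m + j)] C) :
    ∀ ⦃f : (Fin (j + 2) → S) → ℝ≥0∞⦄, Measurable f →
      ∫⁻ ω in C, f (seg m (j + 1) ω) ∂P = ∫⁻ ω in C, pk κ j f (seg m j ω) ∂P := by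
  have hCg : MeasurableSet C := Filt_le_pi _ _ hC
  have hseg_last : ∀ ω : ℕ → S, seg m j ω (Fin.last j) = ω (m + j) := by
    intro ω; show ω (m + ((Fin.last j : Fin (j + 1)) : ℕ)) = _; rw [Fin.val_last]
  refine Measurable.ennreal_induction
    (motive := fun f : (Fin (j + 2) → S) → ℝ≥0∞ =>
      ∫⁻ ω in C, f (seg m (j + 1) ω) ∂P = ∫⁻ ω in C, pk κ j f (seg m j ω) ∂P) ?_ ?_ ?_
  · intro c D hD
    have hpk : ∀ w : Fin (j + 1) → S,
        pk κ j (Set.indicator D fun _ => c) w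
          = c * κ (w (Fin.last j)) {s' | Fin.snoc w s' ∈ D} := by
      intro w
      have h1 : ∀ s' : S, Set.indicator D (fun _ => c) (Fin.snoc w s')
          = Set.indicator {s' : S | Fin.snoc w s' ∈ D} (fun _ => c) s' := by
        intro s'
        by_cases hs : Fin.snoc w s' ∈ D <;> simp [Set.indicator_apply, hs]
      calc pk κ j (Set.indicator D fun _ => c) w
          = ∫⁻ s', Set.indicator {s' : S | Fin.snoc w s' ∈ D} (fun _ => c) s'
              ∂(κ (w (Fin.last j))) := lintegral_congr h1
        _ = c * κ (w (Fin.last j)) {s' | Fin.snoc w s' ∈ D} :=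
            lintegral_indicator_const ((measurable_snoc_right w) hD) c
    have hL : ∀ v : Fin (j + 2) → S,
        Set.indicator D (fun _ => c) v = c * Set.indicator D (fun _ => (1 : ℝ≥0∞)) v := by
      intro v; by_cases hv : v ∈ D <;> simp [Set.indicator_apply, hv]
    calc ∫⁻ ω in C, Set.indicator D (fun _ => c) (seg m (j + 1) ω) ∂P
        = ∫⁻ ω in C, c * Set.indicator D (fun _ => (1 : ℝ≥0∞)) (seg m (j + 1) ω) ∂P :=
          lintegral_congr fun ω => hL _
      _ = c * ∫⁻ ω in C, Set.indicator D (fun _ => (1 : ℝ≥0∞)) (seg m (j + 1) ω) ∂P :=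
          lintegral_const_mul c ((measurable_const.indicator hD).comp (measurable_seg m (j + 1)))
      _ = c * P (seg m (j + 1) ⁻¹' D ∩ C) := by
          rw [lintegral_indicator_preimage P (measurable_seg m (j + 1)) hD]
      _ = c * ∫⁻ ω in C, κ (ω (m + j)) {s' | Fin.snoc (seg m j ω) s' ∈ D} ∂P := by
          rw [rect_step κ P hMP j m C hC D hD]
      _ = ∫⁻ ω in C, c * κ (ω (m + j)) {s' | Fin.snoc (seg m j ω) s' ∈ D} ∂P :=
          (lintegral_const_mul c (meas_sec κ hD m)).symm
      _ = ∫⁻ ω in C, pk κ j (Set.indicator D fun _ => c) (seg m j ω) ∂P := by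
          refine lintegral_congr fun ω => ?_
          rw [hpk, hseg_last]
  · intro f g _hsupp hf hg IHf IHg
    have hpk : ∀ w : Fin (j + 1) → S, pk κ j (f + g) w = pk κ j f w + pk κ j g w := by
      intro w
      have : ∀ s' : S, (f + g) (Fin.snoc w s') = f (Fin.snoc w s') + g (Fin.snoc w s') :=
        fun s' => rfl
      calc pk κ j (f + g) w
          = ∫⁻ s', (f (Fin.snoc w s') + g (Fin.snoc w s')) ∂(κ (w (Fin.last j))) :=
            lintegral_congr this
        _ = pk κ j f w + pk κ j g w :=
            lintegral_add_left (hf.comp (measurable_snoc_right w)) _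
    calc ∫⁻ ω in C, (f + g) (seg m (j + 1) ω) ∂P
        = ∫⁻ ω in C, (f (seg m (j + 1) ω) + g (seg m (j + 1) ω)) ∂P := lintegral_congr fun ω => rfl
      _ = (∫⁻ ω in C, f (seg m (j + 1) ω) ∂P) + ∫⁻ ω in C, g (seg m (j + 1) ω) ∂P :=
          lintegral_add_left (hf.comp (measurable_seg m (j + 1))) _
      _ = (∫⁻ ω in C, pk κ j f (seg m j ω) ∂P) + ∫⁻ ω in C, pk κ j g (seg m j ω) ∂P := by
          rw [IHf, IHg]
      _ = ∫⁻ ω in C, (pk κ j f (seg m j ω) + pk κ j g (seg m j ω)) ∂P :=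
          (lintegral_add_left ((pk_meas κ hf).comp (measurable_seg m j)) _).symm
      _ = ∫⁻ ω in C, pk κ j (f + g) (seg m j ω) ∂P :=
          lintegral_congr fun ω => (hpk (seg m j ω)).symm
  · intro f hfm hmono IH
    have hpk : ∀ w : Fin (j + 1) → S,
        pk κ j (fun x => ⨆ n, f n x) w = ⨆ n, pk κ j (f n) w := by
      intro w
      calc pk κ j (fun x => ⨆ n, f n x) w
          = ∫⁻ s', ⨆ n, f n (Fin.snoc w s') ∂(κ (w (Fin.last j))) := rfl
        _ = ⨆ n, ∫⁻ s', f n (Fin.snoc w s') ∂(κ (w (Fin.last j))) :=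
            lintegral_iSup (fun n => (hfm n).comp (measurable_snoc_right w))
              (fun a b hab s' => hmono hab _)
        _ = ⨆ n, pk κ j (f n) w := rfl
    calc ∫⁻ ω in C, (fun x => ⨆ n, f n x) (seg m (j + 1) ω) ∂P
        = ⨆ n, ∫⁻ ω in C, f n (seg m (j + 1) ω) ∂P :=
          lintegral_iSup (fun n => (hfm n).comp (measurable_seg m (j + 1)))
            (fun a b hab ω => hmono hab _)
      _ = ⨆ n, ∫⁻ ω in C, pk κ j (f n) (seg m j ω) ∂P := iSup_congr IH
      _ = ∫⁻ ω in C, ⨆ n, pk κ j (f n) (seg m j ω) ∂P :=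
          (lintegral_iSup (fun n => (pk_meas κ (hfm n)).comp (measurable_seg m j))
            (fun a b hab ω => lintegral_mono fun s' => hmono hab _)).symm
      _ = ∫⁻ ω in C, pk κ j (fun x => ⨆ n, f n x) (seg m j ω) ∂P :=
          lintegral_congr fun ω => (hpk (seg m j ω)).symm

lemma seg_markov (hMP : MProp κ P) :
    ∀ (j m : ℕ) (C : Set (ℕ → S)), MeasurableSet[Filt S m] C →
      ∀ {f : (Fin (j + 1) → S) → ℝ≥0∞}, Measurable f →
      ∫⁻ ω in C, f (seg m j ω) ∂P = ∫⁻ ω in C, iterK κ j f (ω m) ∂P := by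
  intro j
  induction j with
  | zero =>
      intro m C _hC f _hf
      refine lintegral_congr fun ω => ?_
      have : seg m 0 ω = fun _ => ω m := by
        funext i
        have : (i : ℕ) = 0 := by omega
        show ω (m + (i : ℕ)) = ω m
        rw [this, Nat.add_zero]
      rw [this]
      rfl
  | succ j IH =>
      intro m C hC f hf
      rw [step_f κ P hMP j m C (Filt_mono (Nat.le_add_right m j) _ hC) hf]
      exact IH m C hC (pk_meas κ hf)

lemma pattern_prob (hMP : MProp κ P) (j m : ℕ) (C : Set (ℕ → S))
    (hC : MeasurableSet[Filt S m] C) {D : Set (Fin (j + 1) → S)} (hD : MeasurableSet D) :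
    P (seg m j ⁻¹' D ∩ C)
      = ∫⁻ ω in C, iterK κ j (Set.indicator D fun _ => (1 : ℝ≥0∞)) (ω m) ∂P := by
  rw [← lintegral_indicator_preimage P (measurable_seg m j) hD]
  exact seg_markov κ P hMP j m C hC (measurable_const.indicator hD)

end

end LemmaA1Aux

/-- Lemma A.1. Let `Z` be a Harris recurrent Markov chain with maximal
irreducibility measure `ψ`. If a measurable set `W ⊆ 𝒵^n` (`n = N + 2 ≥ 2`) satisfies
`ψ(W_(1)) > 0` and `P_z(Z_{1:n} ∈ W) > 0` for all `z ∈ W_(1)`, then for every starting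
point `z`, `P_z(Z_{l:l+n−1} ∈ W for infinitely many l) = 1`. -/
theorem harris_visits_W_infinitely_often
    {S : Type*} [MeasurableSpace S]
    (κ : Kernel S S) (Pz : S → Measure (ℕ → S)) (ψ : Measure S)
    (hFam : IsMarkovFamily κ Pz)
    (hmax : IsMaxIrreducibilityMeasure κ ψ)
    (hHarris : HarrisProp κ Pz ψ)
    {N : ℕ} (W : Set (Fin (N + 2) → S)) (hWmeas : MeasurableSet W)
    (hW1 : 0 < ψ ((fun w => w 0) '' W))
    (hWpos : ∀ z ∈ (fun w => w 0) '' W,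
      0 < Pz z {ω | (fun i : Fin (N + 2) => ω (i : ℕ)) ∈ W}) :
    ∀ z : S,
      Pz z {ω | ∀ M : ℕ, ∃ l : ℕ, M ≤ l ∧ (fun i : Fin (N + 2) => ω (l + (i : ℕ))) ∈ W} = 1 := by
  classical
  obtain ⟨hprob, hstart, hmk⟩ := hFam
  -- Replace `κ` by a Markov kernel `κ'` which agrees with `κ` along the chain.
  set G : Set S := (fun x => κ x Set.univ) ⁻¹' {1} with hGdef
  have hGm : MeasurableSet G :=
    (Kernel.measurable_coe κ MeasurableSet.univ) (measurableSet_singleton 1)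
  set κ' : Kernel S S := Kernel.piecewise hGm κ (Kernel.deterministic id measurable_id)
    with hκ'def
  haveI hκ'markov : IsMarkovKernel κ' := by
    constructor
    intro a
    by_cases ha : a ∈ G
    · constructor
      rw [hκ'def, Kernel.piecewise_apply, if_pos ha]
      exact Set.mem_singleton_iff.mp ha
    · constructor
      rw [hκ'def, Kernel.piecewise_apply, if_neg ha, Kernel.deterministic_apply]
      simp
  -- Along the chain, the state is a.s. in `G`.
  have haeG : ∀ (z' : S) (t : ℕ), ∀ᵐ ω ∂(Pz z'), ω t ∈ G := by
    intro z' t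
    haveI := hprob z'
    have hevalm : Measurable fun ω : ℕ → S => ω t := measurable_pi_apply t
    set ν := (Pz z').map (fun ω : ℕ → S => ω t) with hν
    haveI : IsProbabilityMeasure ν := Measure.isProbabilityMeasure_map hevalm.aemeasurable
    have hκu : Measurable fun x => κ x Set.univ := Kernel.measurable_coe κ MeasurableSet.univ
    have hsetint : ∀ B : Set S, MeasurableSet B → ν B < ∞ →
        ∫⁻ x in B, κ x Set.univ ∂ν = ∫⁻ x in B, (fun _ => (1 : ℝ≥0∞)) x ∂ν := by
      intro B hB _
      rw [setLIntegral_map hB hκu hevalm]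
      have hCF : MeasurableSet[Filt S t] ((fun ω : ℕ → S => ω t) ⁻¹' B) :=
        measurableSet_eval le_rfl hB
      have h1 := hmk z' t (fun _ => 1) measurable_const _ hCF
      have h2 : ∫⁻ ω in (fun ω : ℕ → S => ω t) ⁻¹' B, κ (ω t) Set.univ ∂(Pz z')
          = Pz z' ((fun ω : ℕ → S => ω t) ⁻¹' B) := by
        calc ∫⁻ ω in (fun ω : ℕ → S => ω t) ⁻¹' B, κ (ω t) Set.univ ∂(Pz z')
            = ∫⁻ ω in (fun ω : ℕ → S => ω t) ⁻¹' B,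
                ∫⁻ s', (1 : ℝ≥0∞) ∂(κ (ω t)) ∂(Pz z') :=
              lintegral_congr fun ω => lintegral_one.symm
          _ = ∫⁻ ω in (fun ω : ℕ → S => ω t) ⁻¹' B, (1 : ℝ≥0∞) ∂(Pz z') := h1.symm
          _ = Pz z' ((fun ω : ℕ → S => ω t) ⁻¹' B) := setLIntegral_one _
      rw [h2, setLIntegral_one, hν, Measure.map_apply hevalm hB]
    have hae : (fun x => κ x Set.univ) =ᵐ[ν] fun _ => 1 :=
      ae_eq_of_forall_setLIntegral_eq_of_sigmaFinite hκu measurable_const hsetint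
    have hae2 : ∀ᵐ x ∂ν, x ∈ G := hae.mono fun x hx => by
      simpa [hGdef] using hx
    rw [hν] at hae2
    exact (ae_map_iff hevalm.aemeasurable hGm).mp hae2
  -- The Markov property holds with `κ'` in place of `κ`.
  have hMP' : ∀ z' : S, MProp κ' (Pz z') := by
    intro z' n g hg C hC
    haveI := hprob z'
    rw [hmk z' n g hg C hC]
    refine lintegral_congr_ae (ae_restrict_of_ae ?_)
    filter_upwards [haeG z' n] with ω hω
    rw [hκ'def, Kernel.piecewise_apply, if_pos hω]
  -- The probability of seeing the pattern `W` over the next `N+2` steps.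
  set Q : S → ℝ≥0∞ := iterK κ' (N + 1) (Set.indicator W fun _ => (1 : ℝ≥0∞)) with hQdef
  have hQm : Measurable Q := iterK_meas κ' (N + 1) _ (measurable_const.indicator hWmeas)
  have hkeyQ : ∀ (z' : S) (m : ℕ) (C : Set (ℕ → S)), MeasurableSet[Filt S m] C →
      Pz z' (seg m (N + 1) ⁻¹' W ∩ C) = ∫⁻ ω in C, Q (ω m) ∂(Pz z') := by
    intro z' m C hC
    haveI := hprob z'
    exact pattern_prob κ' (Pz z') (hMP' z') (N + 1) m C hC hWmeas
  have hQz : ∀ z' : S, Pz z' {ω : ℕ → S | (fun i : Fin (N + 2) => ω (i : ℕ)) ∈ W} = Q z' := by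
    intro z'
    haveI := hprob z'
    have hseg0 : ∀ ω : ℕ → S, seg 0 (N + 1) ω = fun i : Fin (N + 2) => ω (i : ℕ) := by
      intro ω; funext i
      show ω (0 + (i : ℕ)) = ω (i : ℕ)
      rw [Nat.zero_add]
    have h0 : {ω : ℕ → S | (fun i : Fin (N + 2) => ω (i : ℕ)) ∈ W}
        = seg 0 (N + 1) ⁻¹' W ∩ Set.univ := by
      ext ω
      simp [Set.mem_preimage, hseg0 ω]
    rw [h0, hkeyQ z' 0 Set.univ MeasurableSet.univ, Measure.restrict_univ]
    have hmeas1 : MeasurableSet {ω : ℕ → S | Q (ω 0) = Q z'} :=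
      (hQm.comp (measurable_pi_apply 0)) (measurableSet_singleton (Q z'))
    have h1 : Pz z' {ω : ℕ → S | Q (ω 0) = Q z'} = 1 := by
      have hsub : {ω : ℕ → S | ω 0 = z'} ⊆ {ω : ℕ → S | Q (ω 0) = Q z'} := by
        intro ω h
        show Q (ω 0) = Q z'
        rw [show ω 0 = z' from h]
      refine le_antisymm prob_le_one ?_
      calc (1 : ℝ≥0∞) = Pz z' {ω : ℕ → S | ω 0 = z'} := (hstart z').symm
        _ ≤ _ := measure_mono hsub
    have hae : ∀ᵐ ω ∂(Pz z'), Q (ω 0) = Q z' := by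
      rw [ae_iff]
      have hcompl : {ω : ℕ → S | ¬ Q (ω 0) = Q z'} = {ω : ℕ → S | Q (ω 0) = Q z'}ᶜ := rfl
      rw [hcompl]
      exact (prob_compl_eq_zero_iff hmeas1).mpr h1
    calc ∫⁻ ω, Q (ω 0) ∂(Pz z') = ∫⁻ _ω, Q z' ∂(Pz z') := lintegral_congr_ae hae
      _ = Q z' := by rw [lintegral_const, measure_univ, mul_one]
  -- Choose a level `ε` such that `A := {Q > ε}` is charged by `ψ`.
  have hQpos : ∀ x ∈ (fun w : Fin (N + 2) → S => w 0) '' W, 0 < Q x := fun x hx => by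
    rw [← hQz x]; exact hWpos x hx
  obtain ⟨n, hψA⟩ : ∃ n : ℕ, 0 < ψ {x | ((n : ℝ≥0∞))⁻¹ < Q x} := by
    by_contra hcon
    push_neg at hcon
    have hsub : (fun w : Fin (N + 2) → S => w 0) '' W
        ⊆ ⋃ n : ℕ, {x | ((n : ℝ≥0∞))⁻¹ < Q x} := by
      intro x hx
      obtain ⟨n, hn⟩ := ENNReal.exists_inv_nat_lt (hQpos x hx).ne'
      exact Set.mem_iUnion.2 ⟨n, hn⟩
    have hz : ψ (⋃ n : ℕ, {x | ((n : ℝ≥0∞))⁻¹ < Q x}) = 0 :=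
      measure_iUnion_null fun n => le_antisymm (hcon n) zero_le
    have : ψ ((fun w : Fin (N + 2) → S => w 0) '' W) = 0 :=
      le_antisymm (le_trans (measure_mono hsub) (le_of_eq hz)) zero_le
    exact hW1.ne' this
  set ε : ℝ≥0∞ := ((n : ℝ≥0∞))⁻¹ with hεdef
  set A : Set S := {x | ε < Q x} with hAdef
  have hAm : MeasurableSet A := measurableSet_lt measurable_const hQm
  have hn0 : n ≠ 0 := by
    rintro rfl
    have hAempty : A = ∅ := by
      ext x
      simp [hAdef, hεdef, not_top_lt]
    rw [hAempty] at hψA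
    simp at hψA
  have hε0 : 0 < ε := ENNReal.inv_pos.2 (ENNReal.natCast_ne_top n)
  have hε1 : ε ≤ 1 := by
    rw [hεdef]
    refine ENNReal.inv_le_one.2 ?_
    exact_mod_cast Nat.one_le_iff_ne_zero.2 hn0
  have hεlt : 1 - ε < 1 := ENNReal.sub_lt_self one_ne_top one_ne_zero hε0.ne'
  intro z
  haveI := hprob z
  set IOA : Set (ℕ → S) := {ω : ℕ → S | ∀ N : ℕ, ∃ k : ℕ, N ≤ k ∧ ω k ∈ A} with hIOAdef
  have hIOAeq : IOA = ⋂ M : ℕ, ⋃ k : ℕ, ⋃ (_ : M ≤ k), (fun ω : ℕ → S => ω k) ⁻¹' A := by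
    ext ω
    simp [hIOAdef, Set.mem_iInter, Set.mem_iUnion]
  have hIOAm : MeasurableSet IOA := by
    rw [hIOAeq]
    exact MeasurableSet.iInter fun M => MeasurableSet.iUnion fun k =>
      MeasurableSet.iUnion fun _ => (measurable_pi_apply k) hAm
  have hIOA1 : Pz z IOA = 1 := hHarris A hAm hψA z
  set pat : ℕ → Set (ℕ → S) := fun l => seg l (N + 1) ⁻¹' W with hpatdef
  have hpatm : ∀ l, MeasurableSet (pat l) := fun l => measurable_seg l (N + 1) hWmeas
  set Fail : ℕ → Set (ℕ → S) := fun M => {ω : ℕ → S | ∀ l, M ≤ l → ω ∉ pat l} with hFaildef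
  -- one-step estimate
  have hstepA : ∀ (m : ℕ) (C : Set (ℕ → S)), MeasurableSet[Filt S m] C →
      C ⊆ {ω : ℕ → S | ω m ∈ A} → Pz z (C \ pat m) ≤ (1 - ε) * Pz z C := by
    intro m C hC hCA
    have h1 : Pz z (pat m ∩ C) = ∫⁻ ω in C, Q (ω m) ∂(Pz z) := hkeyQ z m C hC
    have h2 : ε * Pz z C ≤ Pz z (pat m ∩ C) := by
      rw [h1]
      calc ε * Pz z C = ∫⁻ _ω in C, ε ∂(Pz z) := (setLIntegral_const C ε).symm
        _ ≤ ∫⁻ ω in C, Q (ω m) ∂(Pz z) :=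
            setLIntegral_mono (hQm.comp (measurable_pi_apply m)) fun ω hω => (hCA hω).le
    have h3 : Pz z (C ∩ pat m) + Pz z (C \ pat m) = Pz z C :=
      measure_inter_add_diff C (hpatm m)
    have h4 : Pz z (C \ pat m) + ε * Pz z C ≤ Pz z C := by
      calc Pz z (C \ pat m) + ε * Pz z C
          ≤ Pz z (C \ pat m) + Pz z (C ∩ pat m) := by
            refine add_le_add_right ?_ _
            rw [Set.inter_comm]
            exact h2
        _ = Pz z C := by rw [add_comm]; exact h3
    have hc_fin : Pz z C ≠ ∞ := (measure_lt_top _ _).ne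
    have hεc_fin : ε * Pz z C ≠ ∞ := by
      refine ENNReal.mul_ne_top ?_ hc_fin
      rw [hεdef]
      exact ENNReal.inv_ne_top.2 (by exact_mod_cast hn0)
    have h5 : Pz z (C \ pat m) ≤ Pz z C - ε * Pz z C :=
      ENNReal.le_sub_of_add_le_right hεc_fin h4
    calc Pz z (C \ pat m) ≤ Pz z C - ε * Pz z C := h5
      _ = (1 - ε) * Pz z C := by
          rw [ENNReal.sub_mul (fun _ _ => hc_fin), one_mul]
  -- main inductive estimate
  have hclaim : ∀ (K : ℕ) (m : ℕ) (C : Set (ℕ → S)), MeasurableSet[Filt S m] C →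
      Pz z (C ∩ Fail m ∩ IOA) ≤ (1 - ε) ^ K * Pz z C := by
    intro K
    induction K with
    | zero =>
        intro m C hC
        rw [pow_zero, one_mul]
        exact measure_mono (Set.inter_subset_left.trans Set.inter_subset_left)
    | succ K IH =>
        intro m C hC
        set FV : ℕ → Set (ℕ → S) := fun d =>
          ((fun ω : ℕ → S => ω (m + d)) ⁻¹' A) ∩
            ⋂ (i : ℕ), ⋂ (_ : m ≤ i ∧ i < m + d), (fun ω : ℕ → S => ω i) ⁻¹' Aᶜ with hFVdef
        have hFVF : ∀ d, MeasurableSet[Filt S (m + d)] (FV d) := fun d =>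
          (measurableSet_eval le_rfl hAm).inter
            (MeasurableSet.iInter fun i => MeasurableSet.iInter fun hi =>
              measurableSet_eval (le_of_lt hi.2) hAm.compl)
        have hcover : C ∩ Fail m ∩ IOA ⊆ ⋃ d : ℕ, (C ∩ FV d) ∩ Fail m ∩ IOA := by
          rintro ω ⟨⟨hCω, hFailω⟩, hIOAω⟩
          have hex : ∃ k : ℕ, m ≤ k ∧ ω k ∈ A := hIOAω m
          have hspec := Nat.find_spec hex
          refine Set.mem_iUnion.2 ⟨Nat.find hex - m, ⟨⟨hCω, ?_, ?_⟩, hFailω⟩, hIOAω⟩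
          · show ω (m + (Nat.find hex - m)) ∈ A
            rw [Nat.add_sub_cancel' hspec.1]
            exact hspec.2
          · refine Set.mem_iInter.2 fun i => Set.mem_iInter.2 fun hi => ?_
            intro hiA
            have hik : i < Nat.find hex := by
              have := hi.2
              rw [Nat.add_sub_cancel' hspec.1] at this
              exact this
            exact Nat.find_min hex hik ⟨hi.1, hiA⟩
        have hterm : ∀ d : ℕ, Pz z ((C ∩ FV d) ∩ Fail m ∩ IOA)
            ≤ (1 - ε) ^ K * ((1 - ε) * Pz z (C ∩ FV d)) := by
          intro d
          have hCFVF : MeasurableSet[Filt S (m + d)] (C ∩ FV d) :=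
            (Filt_mono (Nat.le_add_right m d) _ hC).inter (hFVF d)
          have hC''F : MeasurableSet[Filt S (m + d + (N + 2))] ((C ∩ FV d) \ pat (m + d)) := by
            refine MeasurableSet.diff (Filt_mono (Nat.le_add_right _ _) _ hCFVF) ?_
            exact (measurable_seg_filt
              (show (m + d) + (N + 1) ≤ m + d + (N + 2) by omega)) hWmeas
          have hsub : (C ∩ FV d) ∩ Fail m ∩ IOA
              ⊆ (((C ∩ FV d) \ pat (m + d)) ∩ Fail (m + d + (N + 2))) ∩ IOA := by
            rintro ω ⟨⟨hCFV, hFailω⟩, hIOAω⟩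
            refine ⟨⟨⟨hCFV, ?_⟩, fun l hl => hFailω l (by omega)⟩, hIOAω⟩
            exact hFailω (m + d) (Nat.le_add_right m d)
          have h1 := IH (m + d + (N + 2)) ((C ∩ FV d) \ pat (m + d)) hC''F
          have h2 : Pz z ((C ∩ FV d) \ pat (m + d)) ≤ (1 - ε) * Pz z (C ∩ FV d) :=
            hstepA (m + d) (C ∩ FV d) hCFVF fun ω hω => hω.2.1
          calc Pz z ((C ∩ FV d) ∩ Fail m ∩ IOA)
              ≤ Pz z ((((C ∩ FV d) \ pat (m + d)) ∩ Fail (m + d + (N + 2))) ∩ IOA) :=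
                measure_mono hsub
            _ ≤ (1 - ε) ^ K * Pz z ((C ∩ FV d) \ pat (m + d)) := h1
            _ ≤ (1 - ε) ^ K * ((1 - ε) * Pz z (C ∩ FV d)) := mul_le_mul_right h2 _
        have hdisjkey : ∀ {a b : ℕ}, a < b → Disjoint (C ∩ FV a) (C ∩ FV b) := by
          intro a b hab
          rw [Set.disjoint_left]
          rintro ω ⟨-, hA1, -⟩ ⟨-, -, hI2⟩
          exact (Set.mem_iInter.1 (Set.mem_iInter.1 hI2 (m + a))
            ⟨Nat.le_add_right m a, by omega⟩) hA1
        have hdisjFV : Pairwise (Function.onFun Disjoint fun d => C ∩ FV d) := by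
          intro d d' hne
          rcases lt_or_gt_of_ne hne with h | h
          · exact hdisjkey h
          · exact (hdisjkey h).symm
        have hmFV : ∀ d, MeasurableSet (C ∩ FV d) := fun d =>
          Filt_le_pi _ _ ((Filt_mono (Nat.le_add_right m d) _ hC).inter (hFVF d))
        calc Pz z (C ∩ Fail m ∩ IOA)
            ≤ Pz z (⋃ d : ℕ, (C ∩ FV d) ∩ Fail m ∩ IOA) := measure_mono hcover
          _ ≤ ∑' d : ℕ, Pz z ((C ∩ FV d) ∩ Fail m ∩ IOA) := measure_iUnion_le _
          _ ≤ ∑' d : ℕ, (1 - ε) ^ K * ((1 - ε) * Pz z (C ∩ FV d)) :=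
              ENNReal.tsum_le_tsum hterm
          _ = ∑' d : ℕ, (1 - ε) ^ (K + 1) * Pz z (C ∩ FV d) := by
              refine tsum_congr fun d => ?_
              rw [← mul_assoc, ← pow_succ]
          _ = (1 - ε) ^ (K + 1) * ∑' d : ℕ, Pz z (C ∩ FV d) := ENNReal.tsum_mul_left
          _ = (1 - ε) ^ (K + 1) * Pz z (⋃ d : ℕ, C ∩ FV d) := by
              rw [measure_iUnion hdisjFV hmFV]
          _ ≤ (1 - ε) ^ (K + 1) * Pz z C :=
              mul_le_mul_right
                (measure_mono (Set.iUnion_subset fun d => Set.inter_subset_left)) _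
  -- conclusion
  have hFail0 : ∀ M, Pz z (Fail M ∩ IOA) = 0 := by
    intro M
    have hle : ∀ K : ℕ, Pz z (Fail M ∩ IOA) ≤ (1 - ε) ^ K := by
      intro K
      have h := hclaim K M Set.univ MeasurableSet.univ
      rw [Set.univ_inter, measure_univ, mul_one] at h
      exact h
    have htend := ENNReal.tendsto_pow_atTop_nhds_zero_of_lt_one hεlt
    exact le_antisymm (ge_of_tendsto htend (Filter.Eventually.of_forall hle)) zero_le
  have hIOAc : Pz z IOAᶜ = 0 := (prob_compl_eq_zero_iff hIOAm).2 hIOA1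
  have hFailz : ∀ M, Pz z (Fail M) = 0 := by
    intro M
    have hsub : Fail M ⊆ (Fail M ∩ IOA) ∪ IOAᶜ := by
      intro ω h
      by_cases hι : ω ∈ IOA
      · exact Or.inl ⟨h, hι⟩
      · exact Or.inr hι
    refine le_antisymm ?_ zero_le
    calc Pz z (Fail M) ≤ Pz z ((Fail M ∩ IOA) ∪ IOAᶜ) := measure_mono hsub
      _ ≤ Pz z (Fail M ∩ IOA) + Pz z IOAᶜ := measure_union_le _ _
      _ = 0 := by rw [hFail0 M, hIOAc, add_zero]
  have hSmeas : MeasurableSet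
      {ω : ℕ → S | ∀ M : ℕ, ∃ l : ℕ, M ≤ l ∧ (fun i : Fin (N + 2) => ω (l + (i : ℕ))) ∈ W} := by
    have heq : {ω : ℕ → S | ∀ M : ℕ, ∃ l : ℕ, M ≤ l ∧
        (fun i : Fin (N + 2) => ω (l + (i : ℕ))) ∈ W}
        = ⋂ M : ℕ, ⋃ l : ℕ, ⋃ (_ : M ≤ l), pat l := by
      ext ω
      simp only [Set.mem_setOf_eq, Set.mem_iInter, Set.mem_iUnion]
      constructor
      · intro h M
        obtain ⟨l, hl1, hl2⟩ := h M
        exact ⟨l, hl1, hl2⟩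
      · intro h M
        obtain ⟨l, hl1, hl2⟩ := h M
        exact ⟨l, hl1, hl2⟩
    rw [heq]
    exact MeasurableSet.iInter fun M => MeasurableSet.iUnion fun l =>
      MeasurableSet.iUnion fun _ => hpatm l
  have hcompl_eq : {ω : ℕ → S | ∀ M : ℕ, ∃ l : ℕ, M ≤ l ∧
      (fun i : Fin (N + 2) => ω (l + (i : ℕ))) ∈ W}ᶜ = ⋃ M : ℕ, Fail M := by
    ext ω
    simp only [Set.mem_compl_iff, Set.mem_setOf_eq, Set.mem_iUnion]
    push_neg
    constructor
    · rintro ⟨M, hM⟩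
      refine ⟨M, fun l hl => ?_⟩
      exact (hM l hl : ¬ _)
    · rintro ⟨M, hM⟩
      exact ⟨M, fun l hl => hM l hl⟩
  have hcompl0 : Pz z {ω : ℕ → S | ∀ M : ℕ, ∃ l : ℕ, M ≤ l ∧
      (fun i : Fin (N + 2) => ω (l + (i : ℕ))) ∈ W}ᶜ = 0 := by
    rw [hcompl_eq]
    exact measure_iUnion_null fun M => hFailz M
  exact (prob_compl_eq_zero_iff hSmeas).1 hcompl0


end PMMPaper
end
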